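/- arXiv:2501.15750 — 3 statements merged into one kernel-verified Lean document; each statement's English description precedes it below -/
import Mathlib

section
/- Let K be a compact plane set and let a ∈ K. For each m ∈ ℕ, there is a nondegenerate bounded point derivation of order m on R(K) at a if and only if δ_{a,m} is continuous on R₀(K). There is a nondegenerate bounded point derivation of infinite order on R(K) at a if and only if δ_{a,m} is continuous on R₀(K) for all m ∈ ℕ. -/
open scoped ENNReal
open Metric Set Filter

noncomputable section

/-- `R₀(K)`: restrictions to `K` of rational functions with poles off `K`. -/
def R0 (K : Set ℂ) : Set C(K, ℂ) :=
  {f | ∃ p q : Polynomial ℂ, (∀ z ∈ K, q.eval z ≠ 0) ∧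
      ∀ z : K, f z = p.eval (z : ℂ) / q.eval (z : ℂ)}

/-- `R(K)`: the uniform closure of `R₀(K)` in `C(K, ℂ)`. -/
def RK (K : Set ℂ) : Set C(K, ℂ) := closure (R0 K)

/-- `M_x`: the ideal of functions in `R(K)` vanishing at `x`. -/
def Mx (K : Set ℂ) (x : ℂ) : Set C(K, ℂ) :=
  {f | f ∈ RK K ∧ ∀ h : x ∈ K, f ⟨x, h⟩ = 0}

/-- `J_x`: the ideal of functions in `R(K)` vanishing on a neighborhood of `x` in `K`. -/
def Jx (K : Set ℂ) (x : ℂ) : Set C(K, ℂ) :=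
  {f | f ∈ RK K ∧ ∃ U : Set ℂ, IsOpen U ∧ x ∈ U ∧ ∀ z : K, (z : ℂ) ∈ U → f z = 0}

/-- The `m`-th ideal power of a set `S` in the ring `C(K, ℂ)`:
finite sums of `m`-fold products of elements of `S`. -/
def idealPow {K : Set ℂ} (S : Set C(K, ℂ)) (m : ℕ) : Set C(K, ℂ) :=
  {f | ∃ (n : ℕ) (g : Fin n → Fin m → C(K, ℂ)),
      (∀ i j, g i j ∈ S) ∧ f = ∑ i, ∏ j, g i j}

/-- `R(K)` is normal. -/
def RKNormal (K : Set ℂ) : Prop :=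
  ∀ K₀ K₁ : Set ℂ, K₀ ⊆ K → K₁ ⊆ K → IsClosed K₀ → IsClosed K₁ → Disjoint K₀ K₁ →
    ∃ f ∈ RK K, (∀ z : K, (z : ℂ) ∈ K₀ → f z = 0) ∧ (∀ z : K, (z : ℂ) ∈ K₁ → f z = 1)

/-- `R(K)` is strongly regular at `x`. -/
def StronglyRegularAt (K : Set ℂ) (x : ℂ) : Prop := closure (Jx K x) = Mx K x

/-- `R(K)` is weakly strongly regular. -/
def WeaklyStronglyRegular (K : Set ℂ) : Prop :=
  ∀ x ∈ K, ∃ m : ℕ, 1 ≤ m ∧ idealPow (Mx K x) m ⊆ closure (Jx K x)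

/-- A Swiss cheese: a compact subset of the closed unit disc with empty interior
such that `R(K) ≠ C(K)`. -/
def IsSwissCheese (K : Set ℂ) : Prop :=
  K.Nonempty ∧ IsCompact K ∧ K ⊆ closedBall (0 : ℂ) 1 ∧ interior K = ∅ ∧ RK K ≠ univ

/-- A point derivation of order `m` on `R(K)` at `a`. -/
def IsPDOrder (K : Set ℂ) (a : ℂ) (m : ℕ) (d : ℕ → C(K, ℂ) → ℂ) : Prop :=
  (∀ f ∈ RK K, ∀ h : a ∈ K, d 0 f = f ⟨a, h⟩) ∧
  (∀ k ≤ m, ∀ f ∈ RK K, ∀ g ∈ RK K, d k (f + g) = d k f + d k g) ∧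
  (∀ k ≤ m, ∀ c : ℂ, ∀ f ∈ RK K, d k (c • f) = c * d k f) ∧
  (∀ k, 1 ≤ k → k ≤ m → ∀ f ∈ RK K, ∀ g ∈ RK K,
      d k (f * g) = ∑ j ∈ Finset.range (k + 1), d j f * d (k - j) g)

/-- A point derivation of infinite order on `R(K)` at `a`. -/
def IsPDInf (K : Set ℂ) (a : ℂ) (d : ℕ → C(K, ℂ) → ℂ) : Prop :=
  (∀ f ∈ RK K, ∀ h : a ∈ K, d 0 f = f ⟨a, h⟩) ∧
  (∀ k, ∀ f ∈ RK K, ∀ g ∈ RK K, d k (f + g) = d k f + d k g) ∧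
  (∀ (k : ℕ) (c : ℂ), ∀ f ∈ RK K, d k (c • f) = c * d k f) ∧
  (∀ k, 1 ≤ k → ∀ f ∈ RK K, ∀ g ∈ RK K,
      d k (f * g) = ∑ j ∈ Finset.range (k + 1), d j f * d (k - j) g)

/-- There is a nondegenerate bounded point derivation of order `m` on `R(K)` at `a`. -/
def HasNBPD (K : Set ℂ) (a : ℂ) (m : ℕ) : Prop :=
  ∃ d : ℕ → C(K, ℂ) → ℂ, IsPDOrder K a m d ∧
    (∀ k ≤ m, Continuous fun f : RK K => d k f.1) ∧
    ∃ f ∈ RK K, d 1 f ≠ 0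

/-- There is a nondegenerate bounded point derivation of infinite order on `R(K)` at `a`. -/
def HasNBPDInf (K : Set ℂ) (a : ℂ) : Prop :=
  ∃ d : ℕ → C(K, ℂ) → ℂ, IsPDInf K a d ∧
    (∀ k, Continuous fun f : RK K => d k f.1) ∧
    ∃ f ∈ RK K, d 1 f ≠ 0

/-- The Browder term `r(D)/s_a(D)^{m+1}` for the disc with center `c` and radius `ρ`;
here `s_a(D) = |dist a c − ρ|` is the distance from `a` to the boundary circle. -/
def browderTerm (a c : ℂ) (ρ : ℝ) (m : ℕ) : ℝ≥0∞ :=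
  ENNReal.ofReal ρ / ENNReal.ofReal (|dist a c - ρ| ^ (m + 1))

/-- The `m`-th order Browder sum at `a` for a family of discs together with the unit disc. -/
def browderSum {ι : Type*} (c : ι → ℂ) (ρ : ι → ℝ) (a : ℂ) (m : ℕ) : ℝ≥0∞ :=
  browderTerm a 0 1 m + ∑' i, browderTerm a (c i) (ρ i) m

/-- Sup norm of `f` over `K`. -/
def supNormOn (K : Set ℂ) (f : ℂ → ℂ) : ℝ := ⨆ z : K, ‖f (z : ℂ)‖

/-- The rational function `p/q`. -/
def ratFun (p q : Polynomial ℂ) : ℂ → ℂ := fun z => p.eval z / q.eval z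

/-- `δ_{a,m}(f) = f⁽ᵐ⁾(a)/m!`. -/
def deltaVal (m : ℕ) (f : ℂ → ℂ) (a : ℂ) : ℂ := iteratedDeriv m f a / (m.factorial : ℂ)

/-- `δ_{a,m}` is continuous (bounded) on `R₀(K)` with respect to the sup norm. -/
def DeltaCont (K : Set ℂ) (a : ℂ) (m : ℕ) : Prop :=
  ∃ C : ℝ, ∀ p q : Polynomial ℂ, (∀ z ∈ K, q.eval z ≠ 0) →
    ‖deltaVal m (ratFun p q) a‖ ≤ C * supNormOn K (ratFun p q)

/-- The square root of a plane set: `{z : z² ∈ E}`. -/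
def sqrtSet (E : Set ℂ) : Set ℂ := {z | z ^ 2 ∈ E}

/-- The restriction of `z ↦ zᵐ` to `K`. -/
def zpowMap (K : Set ℂ) (m : ℕ) : C(K, ℂ) :=
  ⟨fun z => (z : ℂ) ^ m, continuous_subtype_val.pow m⟩

/-- The restriction of `z ↦ (z−a)ⁿ` to `K`. -/
def zamMap (K : Set ℂ) (a : ℂ) (n : ℕ) : C(K, ℂ) :=
  ⟨fun z => ((z : ℂ) - a) ^ n, (continuous_subtype_val.sub continuous_const).pow n⟩


namespace Lem28
open Polynomial

lemma ratFun_apply (p q : Polynomial ℂ) (z : ℂ) : ratFun p q z = p.eval z / q.eval z := rfl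

lemma ev_ne (q : Polynomial ℂ) {z : ℂ} (h : q.eval z ≠ 0) : ∀ᶠ w in nhds z, q.eval w ≠ 0 :=
  q.continuousAt.eventually_ne h

lemma ratFun_diffAt (p q : Polynomial ℂ) {z : ℂ} (h : q.eval z ≠ 0) :
    DifferentiableAt ℂ (ratFun p q) z :=
  (p.differentiableAt).div (q.differentiableAt) h

lemma ratFun_deriv (p q : Polynomial ℂ) {z : ℂ} (h : q.eval z ≠ 0) :
    deriv (ratFun p q) z =
      (p.derivative * q - p * q.derivative).eval z / (q.eval z) ^ 2 := by
  have := deriv_fun_div (c := fun w => p.eval w) (d := fun w => q.eval w)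
    (p.differentiableAt (x := z)) (q.differentiableAt) h
  rw [show ratFun p q = fun w => p.eval w / q.eval w from rfl, this, p.deriv, q.deriv]
  simp [eval_mul, eval_sub]

/-- closed form for iterated derivatives of rational functions -/
lemma ratFun_iteratedDeriv_closed (p q : Polynomial ℂ) (n : ℕ) :
    ∃ r : Polynomial ℂ, ∀ z : ℂ, q.eval z ≠ 0 →
      iteratedDeriv n (ratFun p q) z = r.eval z / (q.eval z) ^ (n + 1) := by
  induction n with
  | zero => exact ⟨p, fun z hz => by simp [iteratedDeriv_zero, ratFun_apply]⟩
  | succ n ih =>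
    obtain ⟨r, hr⟩ := ih
    refine ⟨r.derivative * q - C ((n:ℂ)+1) * (r * q.derivative), fun z hz => ?_⟩
    have hev : iteratedDeriv n (ratFun p q) =ᶠ[nhds z] ratFun r (q ^ (n+1)) := by
      filter_upwards [ev_ne q hz] with w hw
      rw [hr w hw, ratFun_apply, eval_pow]
    rw [iteratedDeriv_succ, hev.deriv_eq, ratFun_deriv r _ (by rw [eval_pow]; exact pow_ne_zero _ hz)]
    have hqz : q.eval z ^ (n+1) ≠ 0 := pow_ne_zero _ hz
    rw [derivative_pow]
    simp only [eval_mul, eval_sub, eval_pow, eval_C, eval_natCast, Nat.cast_add, Nat.cast_one, Nat.add_sub_cancel]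
    field_simp
    ring

lemma ratFun_itd_diffAt (p q : Polynomial ℂ) (n : ℕ) {z : ℂ} (h : q.eval z ≠ 0) :
    DifferentiableAt ℂ (iteratedDeriv n (ratFun p q)) z := by
  obtain ⟨r, hr⟩ := ratFun_iteratedDeriv_closed p q n
  have hev : iteratedDeriv n (ratFun p q) =ᶠ[nhds z] ratFun r (q ^ (n+1)) := by
    filter_upwards [ev_ne q h] with w hw
    rw [hr w hw, ratFun_apply, eval_pow]
  exact (ratFun_diffAt r (q ^ (n+1)) (by simpa [eval_pow] using pow_ne_zero (n+1) h)).congr_of_eventuallyEq hev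

/-- additivity of iterated derivatives on rational functions -/
lemma ratFun_itd_add (p q r s : Polynomial ℂ) (n : ℕ) :
    ∀ z : ℂ, q.eval z ≠ 0 → s.eval z ≠ 0 →
    iteratedDeriv n (fun w => ratFun p q w + ratFun r s w) z
      = iteratedDeriv n (ratFun p q) z + iteratedDeriv n (ratFun r s) z := by
  induction n with
  | zero => intro z _ _; simp [iteratedDeriv_zero]
  | succ n ih =>
    intro z hq hs
    have hev : iteratedDeriv n (fun w => ratFun p q w + ratFun r s w)
        =ᶠ[nhds z] fun w => iteratedDeriv n (ratFun p q) w + iteratedDeriv n (ratFun r s) w := by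
      filter_upwards [ev_ne q hq, ev_ne s hs] with w h1 h2
      exact ih w h1 h2
    rw [iteratedDeriv_succ, hev.deriv_eq, deriv_fun_add (ratFun_itd_diffAt p q n hq)
      (ratFun_itd_diffAt r s n hs), ← iteratedDeriv_succ, ← iteratedDeriv_succ]

lemma ratFun_itd_const_mul (c : ℂ) (p q : Polynomial ℂ) (n : ℕ) :
    ∀ z : ℂ, q.eval z ≠ 0 →
    iteratedDeriv n (fun w => c * ratFun p q w) z = c * iteratedDeriv n (ratFun p q) z := by
  induction n with
  | zero => intro z _; simp [iteratedDeriv_zero]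
  | succ n ih =>
    intro z hq
    have hev : iteratedDeriv n (fun w => c * ratFun p q w)
        =ᶠ[nhds z] fun w => c * iteratedDeriv n (ratFun p q) w := by
      filter_upwards [ev_ne q hq] with w h1
      exact ih w h1
    rw [iteratedDeriv_succ, hev.deriv_eq, deriv_const_mul c (ratFun_itd_diffAt p q n hq),
      ← iteratedDeriv_succ]

/-- Leibniz rule for iterated derivatives of products of rational functions -/
lemma ratFun_itd_mul (p q r s : Polynomial ℂ) (n : ℕ) :
    ∀ z : ℂ, q.eval z ≠ 0 → s.eval z ≠ 0 →
    iteratedDeriv n (fun w => ratFun p q w * ratFun r s w) z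
      = ∑ j ∈ Finset.range (n+1), (n.choose j : ℂ) *
          (iteratedDeriv j (ratFun p q) z * iteratedDeriv (n-j) (ratFun r s) z) := by
  induction n with
  | zero => intro z _ _; simp [iteratedDeriv_zero]
  | succ n ih =>
    intro z hq hs
    have hev : iteratedDeriv n (fun w => ratFun p q w * ratFun r s w)
        =ᶠ[nhds z] fun w => ∑ j ∈ Finset.range (n+1), (n.choose j : ℂ) *
          (iteratedDeriv j (ratFun p q) w * iteratedDeriv (n-j) (ratFun r s) w) := by
      filter_upwards [ev_ne q hq, ev_ne s hs] with w h1 h2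
      exact ih w h1 h2
    have hdifff : ∀ j : ℕ, DifferentiableAt ℂ (iteratedDeriv j (ratFun p q)) z :=
      fun j => ratFun_itd_diffAt p q j hq
    have hdiffg : ∀ j : ℕ, DifferentiableAt ℂ (iteratedDeriv j (ratFun r s)) z :=
      fun j => ratFun_itd_diffAt r s j hs
    rw [iteratedDeriv_succ, hev.deriv_eq, deriv_fun_sum (A := fun j w => (n.choose j : ℂ) *
        (iteratedDeriv j (ratFun p q) w * iteratedDeriv (n-j) (ratFun r s) w)) (fun j _ =>
      (((hdifff j).mul (hdiffg (n-j))).const_mul _))]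
    have hterm : ∀ j ∈ Finset.range (n+1),
        deriv (fun w => (n.choose j : ℂ) *
          (iteratedDeriv j (ratFun p q) w * iteratedDeriv (n-j) (ratFun r s) w)) z
        = (n.choose j : ℂ) * (iteratedDeriv (j+1) (ratFun p q) z * iteratedDeriv (n-j) (ratFun r s) z)
          + (n.choose j : ℂ) * (iteratedDeriv j (ratFun p q) z * iteratedDeriv (n-j+1) (ratFun r s) z) := by
      intro j _
      rw [deriv_const_mul _ ((hdifff j).fun_mul (hdiffg (n-j))), deriv_fun_mul (hdifff j) (hdiffg (n-j)),
        ← iteratedDeriv_succ, ← iteratedDeriv_succ]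
      ring
    rw [Finset.sum_congr rfl hterm, Finset.sum_add_distrib]
    rw [Finset.sum_choose_succ_mul
      (fun i j => iteratedDeriv i (ratFun p q) z * iteratedDeriv j (ratFun r s) z) n]
    have h1 : ∀ j ∈ Finset.range (n+1), (n.choose j : ℂ) *
        (iteratedDeriv j (ratFun p q) z * iteratedDeriv (n-j+1) (ratFun r s) z)
        = (n.choose j : ℂ) *
        (iteratedDeriv j (ratFun p q) z * iteratedDeriv (n+1-j) (ratFun r s) z) := by
      intro j hj
      rw [Finset.mem_range] at hj
      rw [Nat.sub_add_comm (Nat.lt_succ_iff.mp hj)]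
    rw [Finset.sum_congr rfl h1]
    ring

end Lem28
namespace Lem28
open Polynomial

lemma deltaVal_congr {f g : ℂ → ℂ} {a : ℂ} (m : ℕ) (h : f =ᶠ[nhds a] g) :
    deltaVal m f a = deltaVal m g a := by
  unfold deltaVal; rw [h.iteratedDeriv_eq]

lemma deltaVal_zero' (f : ℂ → ℂ) (a : ℂ) : deltaVal 0 f a = f a := by
  simp [deltaVal, iteratedDeriv_zero]

lemma deltaVal_add (p q r s : Polynomial ℂ) (m : ℕ) {a : ℂ} (hq : q.eval a ≠ 0)
    (hs : s.eval a ≠ 0) :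
    deltaVal m (fun w => ratFun p q w + ratFun r s w) a
      = deltaVal m (ratFun p q) a + deltaVal m (ratFun r s) a := by
  unfold deltaVal
  rw [ratFun_itd_add p q r s m a hq hs, add_div]

lemma deltaVal_const_mul (c : ℂ) (p q : Polynomial ℂ) (m : ℕ) {a : ℂ} (hq : q.eval a ≠ 0) :
    deltaVal m (fun w => c * ratFun p q w) a = c * deltaVal m (ratFun p q) a := by
  unfold deltaVal
  rw [ratFun_itd_const_mul c p q m a hq, mul_div_assoc]

lemma deltaVal_mul (p q r s : Polynomial ℂ) (m : ℕ) {a : ℂ} (hq : q.eval a ≠ 0)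
    (hs : s.eval a ≠ 0) :
    deltaVal m (fun w => ratFun p q w * ratFun r s w) a
      = ∑ j ∈ Finset.range (m+1), deltaVal j (ratFun p q) a * deltaVal (m-j) (ratFun r s) a := by
  unfold deltaVal
  rw [ratFun_itd_mul p q r s m a hq hs, Finset.sum_div]
  refine Finset.sum_congr rfl fun j hj => ?_
  rw [Finset.mem_range, Nat.lt_succ_iff] at hj
  have hfac : (m.choose j : ℂ) * (j.factorial : ℂ) * ((m-j).factorial : ℂ) = (m.factorial : ℂ) := by
    rw [← Nat.cast_mul, ← Nat.cast_mul, Nat.choose_mul_factorial_mul_factorial hj]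
  have h1 : (j.factorial : ℂ) ≠ 0 := Nat.cast_ne_zero.mpr j.factorial_ne_zero
  have h2 : ((m-j).factorial : ℂ) ≠ 0 := Nat.cast_ne_zero.mpr (m-j).factorial_ne_zero
  have h3 : (m.factorial : ℂ) ≠ 0 := Nat.cast_ne_zero.mpr m.factorial_ne_zero
  field_simp
  rw [← hfac]
  ring

lemma deltaVal_sub_rat (p q r s : Polynomial ℂ) (m : ℕ) {a : ℂ} (hq : q.eval a ≠ 0)
    (hs : s.eval a ≠ 0) :
    deltaVal m (ratFun p q) a - deltaVal m (ratFun r s) a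
      = deltaVal m (ratFun (p * s - r * q) (q * s)) a := by
  have hneg : ratFun (-r) s = fun w => (-1 : ℂ) * ratFun r s w := by
    funext w; simp [ratFun_apply, neg_div]
  have h1 : deltaVal m (ratFun (-r) s) a = - deltaVal m (ratFun r s) a := by
    rw [hneg, deltaVal_const_mul (-1) r s m hs]; ring
  have h2 : deltaVal m (ratFun (p * s - r * q) (q * s)) a
      = deltaVal m (fun w => ratFun p q w + ratFun (-r) s w) a := by
    refine deltaVal_congr m ?_
    filter_upwards [ev_ne q hq, ev_ne s hs] with w h1 h2
    rw [ratFun_apply, ratFun_apply, ratFun_apply, eval_mul, eval_sub, eval_mul, eval_mul,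
      eval_neg, div_add_div _ _ h1 h2]
    ring_nf
  rw [h2, deltaVal_add p q (-r) s m hq hs, h1]
  ring

/-- iterated derivative of polynomial evaluation -/
lemma iteratedDeriv_polyeval (n : ℕ) (h : Polynomial ℂ) :
    iteratedDeriv n (fun z => h.eval z) = fun z => ((Polynomial.derivative)^[n] h).eval z := by
  induction n with
  | zero => simp
  | succ n ih =>
    rw [iteratedDeriv_succ, ih]
    funext z
    rw [Function.iterate_succ_apply']
    exact (derivative^[n] h).deriv

lemma ratFun_one (h : Polynomial ℂ) : ratFun h 1 = fun z => h.eval z := by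
  funext z; simp [ratFun_apply]

lemma deltaVal_poly (m : ℕ) (h : Polynomial ℂ) (a : ℂ) :
    deltaVal m (ratFun h 1) a = ((Polynomial.derivative)^[m] h).eval a / (m.factorial : ℂ) := by
  rw [ratFun_one]
  unfold deltaVal
  rw [iteratedDeriv_polyeval]

/-- δ_j((z-a)^e) = kronecker delta -/
lemma deltaVal_zam (j e : ℕ) (a : ℂ) :
    deltaVal j (ratFun ((X - C a) ^ e) 1) a = if j = e then 1 else 0 := by
  rw [deltaVal_poly, iterate_derivative_X_sub_pow]
  rcases lt_trichotomy j e with h | h | h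
  · rw [if_neg h.ne]
    have : e - j ≠ 0 := Nat.sub_ne_zero_of_lt h
    simp [eval_smul, eval_pow, zero_pow this]
  · subst h
    rw [if_pos rfl, Nat.sub_self, pow_zero, Nat.descFactorial_self]
    simp [Nat.cast_ne_zero.mpr j.factorial_ne_zero]
  · rw [if_neg h.ne']
    rw [Nat.descFactorial_eq_zero_iff_lt.mpr h]
    simp

end Lem28
namespace Lem28
open Polynomial

variable {K : Set ℂ}

/-- continuous restriction of a rational function -/
def ratRes (K : Set ℂ) (p q : Polynomial ℂ) (hq : ∀ z ∈ K, q.eval z ≠ 0) : C(K, ℂ) :=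
  ⟨fun z => ratFun p q (z : ℂ),
    (p.continuous.comp continuous_subtype_val).div
      (q.continuous.comp continuous_subtype_val) (fun z => hq z z.2)⟩

lemma ratRes_mem (p q : Polynomial ℂ) (hq : ∀ z ∈ K, q.eval z ≠ 0) :
    ratRes K p q hq ∈ R0 K := ⟨p, q, hq, fun _ => rfl⟩

lemma R0_zero : (0 : C(K, ℂ)) ∈ R0 K :=
  ⟨0, 1, fun z _ => by simp, fun z => by simp [ratFun_apply]⟩

lemma R0_one : (1 : C(K, ℂ)) ∈ R0 K :=
  ⟨1, 1, fun z _ => by simp, fun z => by simp [ratFun_apply]⟩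

lemma R0_add {f g : C(K, ℂ)} (hf : f ∈ R0 K) (hg : g ∈ R0 K) : f + g ∈ R0 K := by
  obtain ⟨p, q, hq, hfz⟩ := hf
  obtain ⟨r, s, hs, hgz⟩ := hg
  refine ⟨p * s + r * q, q * s, fun z hz => by
      simp only [eval_mul]; exact mul_ne_zero (hq z hz) (hs z hz), fun z => ?_⟩
  rw [ContinuousMap.add_apply, hfz z, hgz z]
  rw [eval_add, eval_mul, eval_mul, eval_mul, div_add_div _ _ (hq z z.2) (hs z z.2)]
  ring_nf

lemma R0_smul (c : ℂ) {f : C(K, ℂ)} (hf : f ∈ R0 K) : c • f ∈ R0 K := by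
  obtain ⟨p, q, hq, hfz⟩ := hf
  refine ⟨C c * p, q, hq, fun z => ?_⟩
  rw [ContinuousMap.smul_apply, hfz z, eval_mul, eval_C, smul_eq_mul, mul_div_assoc]

lemma R0_mul {f g : C(K, ℂ)} (hf : f ∈ R0 K) (hg : g ∈ R0 K) : f * g ∈ R0 K := by
  obtain ⟨p, q, hq, hfz⟩ := hf
  obtain ⟨r, s, hs, hgz⟩ := hg
  refine ⟨p * r, q * s, fun z hz => by
      simp only [eval_mul]; exact mul_ne_zero (hq z hz) (hs z hz), fun z => ?_⟩
  rw [ContinuousMap.mul_apply, hfz z, hgz z, eval_mul, eval_mul, div_mul_div_comm]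

lemma R0_neg {f : C(K, ℂ)} (hf : f ∈ R0 K) : -f ∈ R0 K := by
  have := R0_smul (-1) hf
  rwa [show (-1 : ℂ) • f = -f from neg_one_smul ℂ f] at this

lemma R0_sub {f g : C(K, ℂ)} (hf : f ∈ R0 K) (hg : g ∈ R0 K) : f - g ∈ R0 K := by
  rw [sub_eq_add_neg]; exact R0_add hf (R0_neg hg)

lemma zamMap_mem (a : ℂ) (n : ℕ) : zamMap K a n ∈ R0 K :=
  ⟨(X - C a) ^ n, 1, fun z _ => by simp, fun z => by
    simp [zamMap, ratFun_apply, eval_pow]⟩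

lemma zamMap_zero_eq (a : ℂ) : zamMap K a 0 = 1 := by
  ext z; simp [zamMap]

lemma zamMap_succ (a : ℂ) (n : ℕ) : zamMap K a (n + 1) = zamMap K a n * zamMap K a 1 := by
  ext z; simp [zamMap, pow_succ]

section Compact
variable [CompactSpace K]

lemma RK_add {f g : C(K, ℂ)} (hf : f ∈ RK K) (hg : g ∈ RK K) : f + g ∈ RK K := by
  have h : (f, g) ∈ closure (R0 K ×ˢ R0 K) := by
    rw [closure_prod_eq]; exact ⟨hf, hg⟩
  have hc : Continuous fun x : C(K, ℂ) × C(K, ℂ) => x.1 + x.2 := continuous_add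
  have := (mem_closure_image (hc.continuousAt (x := (f, g))) h)
  refine closure_mono ?_ this
  rintro - ⟨⟨u, v⟩, ⟨hu, hv⟩, rfl⟩
  exact R0_add hu hv

lemma RK_mul {f g : C(K, ℂ)} (hf : f ∈ RK K) (hg : g ∈ RK K) : f * g ∈ RK K := by
  have h : (f, g) ∈ closure (R0 K ×ˢ R0 K) := by
    rw [closure_prod_eq]; exact ⟨hf, hg⟩
  have hc : Continuous fun x : C(K, ℂ) × C(K, ℂ) => x.1 * x.2 := continuous_mul
  have := (mem_closure_image (hc.continuousAt (x := (f, g))) h)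
  refine closure_mono ?_ this
  rintro - ⟨⟨u, v⟩, ⟨hu, hv⟩, rfl⟩
  exact R0_mul hu hv

lemma RK_smul (c : ℂ) {f : C(K, ℂ)} (hf : f ∈ RK K) : c • f ∈ RK K := by
  have hc : Continuous fun x : C(K, ℂ) => c • x := continuous_const_smul c
  have := (mem_closure_image (hc.continuousAt (x := f)) hf)
  refine closure_mono ?_ this
  rintro - ⟨u, hu, rfl⟩
  exact R0_smul c hu

omit [CompactSpace K] in
lemma RK_zero : (0 : C(K, ℂ)) ∈ RK K := subset_closure R0_zero

/-- sup norm equals ContinuousMap norm for any continuous representative -/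
lemma supNormOn_eq_norm (hKne : Nonempty K) (p q : Polynomial ℂ) {f : C(K, ℂ)}
    (hrep : ∀ z : K, f z = ratFun p q (z : ℂ)) :
    supNormOn K (ratFun p q) = ‖f‖ := by
  haveI : Nonempty K := hKne
  rw [ContinuousMap.norm_eq_iSup_norm]
  unfold supNormOn
  congr 1
  funext z
  rw [hrep z]

end Compact

end Lem28
namespace Lem28
open Polynomial

variable {K : Set ℂ}

/-- pointwise algebra of rational functions -/
lemma ratFun_add_point (p q r s : Polynomial ℂ) {z : ℂ} (hq : q.eval z ≠ 0) (hs : s.eval z ≠ 0) :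
    ratFun (p * s + r * q) (q * s) z = ratFun p q z + ratFun r s z := by
  simp only [ratFun_apply, eval_add, eval_mul]
  rw [div_add_div _ _ hq hs]
  ring_nf

lemma ratFun_mul_point (p q r s : Polynomial ℂ) (z : ℂ) :
    ratFun (p * r) (q * s) z = ratFun p q z * ratFun r s z := by
  simp only [ratFun_apply, eval_mul]
  rw [div_mul_div_comm]

lemma ratFun_smul_point (c : ℂ) (p q : Polynomial ℂ) (z : ℂ) :
    ratFun (C c * p) q z = c * ratFun p q z := by
  simp only [ratFun_apply, eval_mul, eval_C]
  rw [mul_div_assoc]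

lemma deltaVal_add_rat (p q r s : Polynomial ℂ) (m : ℕ) {a : ℂ} (hq : q.eval a ≠ 0)
    (hs : s.eval a ≠ 0) :
    deltaVal m (ratFun (p * s + r * q) (q * s)) a
      = deltaVal m (ratFun p q) a + deltaVal m (ratFun r s) a := by
  rw [← deltaVal_add p q r s m hq hs]
  refine deltaVal_congr m ?_
  filter_upwards [ev_ne q hq, ev_ne s hs] with w h1 h2
  exact ratFun_add_point p q r s h1 h2

lemma deltaVal_mul_rat (p q r s : Polynomial ℂ) (m : ℕ) {a : ℂ} (hq : q.eval a ≠ 0)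
    (hs : s.eval a ≠ 0) :
    deltaVal m (ratFun (p * r) (q * s)) a
      = ∑ j ∈ Finset.range (m+1), deltaVal j (ratFun p q) a * deltaVal (m-j) (ratFun r s) a := by
  rw [← deltaVal_mul p q r s m hq hs]
  refine deltaVal_congr m (Filter.Eventually.of_forall fun w => ratFun_mul_point p q r s w)

lemma deltaVal_smul_rat (c : ℂ) (p q : Polynomial ℂ) (m : ℕ) {a : ℂ} (hq : q.eval a ≠ 0) :
    deltaVal m (ratFun (C c * p) q) a = c * deltaVal m (ratFun p q) a := by
  rw [← deltaVal_const_mul c p q m hq]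
  exact deltaVal_congr m (Filter.Eventually.of_forall fun w => ratFun_smul_point c p q w)

/-- chosen representation of an element of `R0 K` -/
def repP (g : ↥(R0 K)) : Polynomial ℂ := g.2.choose

def repQ (g : ↥(R0 K)) : Polynomial ℂ := g.2.choose_spec.choose

lemma repQ_ne (g : ↥(R0 K)) : ∀ z ∈ K, (repQ g).eval z ≠ 0 :=
  g.2.choose_spec.choose_spec.1

lemma rep_spec (g : ↥(R0 K)) : ∀ z : K, g.1 z = ratFun (repP g) (repQ g) (z : ℂ) :=
  g.2.choose_spec.choose_spec.2

/-- inclusion of `R0` into `RK` -/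
def iota (K : Set ℂ) : ↥(R0 K) → ↥(RK K) := Set.inclusion subset_closure

lemma iota_isInducing (K : Set ℂ) : Topology.IsInducing (iota K) :=
  (Topology.IsEmbedding.inclusion (subset_closure : R0 K ⊆ RK K)).toIsInducing

lemma iota_isometry (K : Set ℂ) [CompactSpace K] : Isometry (iota K) :=
  Isometry.of_dist_eq fun x y => by
    rw [Subtype.dist_eq, Subtype.dist_eq]; rfl

lemma iota_denseRange (K : Set ℂ) : DenseRange (iota K) := by
  intro x
  have h1 : Subtype.val '' (Set.range (iota K)) = R0 K := by
    ext y
    constructor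
    · rintro ⟨-, ⟨g, rfl⟩, rfl⟩; exact g.2
    · intro hy; exact ⟨iota K ⟨y, hy⟩, ⟨⟨y, hy⟩, rfl⟩, rfl⟩
  rw [Topology.IsInducing.subtypeVal.closure_eq_preimage_closure_image, h1]
  exact x.2

lemma iota_isDenseInducing (K : Set ℂ) : IsDenseInducing (iota K) :=
  ⟨iota_isInducing K, iota_denseRange K⟩

/-- the functional on `R0` given by the chosen representation -/
def delta0 (K : Set ℂ) (a : ℂ) (k : ℕ) : ↥(R0 K) → ℂ :=
  fun g => deltaVal k (ratFun (repP g) (repQ g)) a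

/-- the extension of `δ_{a,k}` to the subtype `RK`. -/
def dExtAux (K : Set ℂ) (a : ℂ) (k : ℕ) : ↥(RK K) → ℂ :=
  (iota_isDenseInducing K).extend (delta0 K a k)

open Classical in
/-- the extension of `δ_{a,k}` to `RK`. -/
def dExt (K : Set ℂ) (a : ℂ) (k : ℕ) (f : C(K, ℂ)) : ℂ :=
  if hf : f ∈ RK K then dExtAux K a k ⟨f, hf⟩ else 0

lemma dExt_of_mem (K : Set ℂ) (a : ℂ) (k : ℕ) {f : C(K, ℂ)} (hf : f ∈ RK K) :
    dExt K a k f = dExtAux K a k ⟨f, hf⟩ := dif_pos hf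

section Ext

variable [Nonempty K] [CompactSpace K] {a : ℂ} (ha : a ∈ K) {k : ℕ}

lemma supNormOn_nonneg (p q : Polynomial ℂ) (hq : ∀ z ∈ K, q.eval z ≠ 0) :
    0 ≤ supNormOn K (ratFun p q) := by
  rw [supNormOn_eq_norm ‹_› p q (f := ratRes K p q hq) (fun z => rfl)]
  exact norm_nonneg _

/-- a DeltaCont bound can be taken nonnegative -/
lemma deltaCont_bound (h : DeltaCont K a k) :
    ∃ C : ℝ, 0 ≤ C ∧ ∀ p q : Polynomial ℂ, (∀ z ∈ K, q.eval z ≠ 0) →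
      ‖deltaVal k (ratFun p q) a‖ ≤ C * supNormOn K (ratFun p q) := by
  obtain ⟨C, hC⟩ := h
  refine ⟨|C|, abs_nonneg C, fun p q hq => (hC p q hq).trans ?_⟩
  exact mul_le_mul_of_nonneg_right (le_abs_self C) (supNormOn_nonneg p q hq)

include ha in
/-- well-definedness of `δ_{a,k}` on restrictions, given a bound -/
lemma deltaVal_welldef (h : DeltaCont K a k) (p q p' q' : Polynomial ℂ)
    (hq : ∀ z ∈ K, q.eval z ≠ 0) (hq' : ∀ z ∈ K, q'.eval z ≠ 0)
    (hagree : ∀ z : K, ratFun p q (z : ℂ) = ratFun p' q' (z : ℂ)) :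
    deltaVal k (ratFun p q) a = deltaVal k (ratFun p' q') a := by
  obtain ⟨C, hC0, hC⟩ := deltaCont_bound h
  have hsub := deltaVal_sub_rat p q p' q' k (hq a ha) (hq' a ha)
  have hqq' : ∀ z ∈ K, (q * q').eval z ≠ 0 := fun z hz => by
    rw [eval_mul]; exact mul_ne_zero (hq z hz) (hq' z hz)
  have hzero : ∀ z : K, ratFun (p * q' - p' * q) (q * q') (z : ℂ) = (0 : C(K, ℂ)) z := by
    intro z
    have h1 : ratFun (p * q' - p' * q) (q * q') (z : ℂ)
        = ratFun p q (z : ℂ) - ratFun p' q' (z : ℂ) := by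
      simp only [ratFun_apply, eval_mul, eval_sub]
      rw [div_sub_div _ _ (hq z z.2) (hq' z z.2)]
      ring_nf
    rw [h1, hagree z, sub_self]; rfl
  have hnorm : supNormOn K (ratFun (p * q' - p' * q) (q * q')) = 0 := by
    rw [supNormOn_eq_norm ‹_› _ _ (f := 0) (fun z => (hzero z).symm)]
    exact norm_zero
  have := hC (p * q' - p' * q) (q * q') hqq'
  rw [hnorm, mul_zero] at this
  have h0 : deltaVal k (ratFun (p * q' - p' * q) (q * q')) a = 0 := by
    have habs := le_antisymm this (norm_nonneg _)
    exact norm_eq_zero.mp habs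
  rw [← sub_eq_zero, hsub, h0]

include ha in
lemma delta0_uniformContinuous (h : DeltaCont K a k) :
    UniformContinuous (delta0 K a k) := by
  obtain ⟨C, hC0, hC⟩ := deltaCont_bound h
  have key : ∀ g₁ g₂ : ↥(R0 K), dist (delta0 K a k g₁) (delta0 K a k g₂) ≤ C * dist g₁ g₂ := by
    intro g₁ g₂
    have hsub := deltaVal_sub_rat (repP g₁) (repQ g₁) (repP g₂) (repQ g₂) k
      (repQ_ne g₁ a ha) (repQ_ne g₂ a ha)
    have hqq' : ∀ z ∈ K, ((repQ g₁) * (repQ g₂)).eval z ≠ 0 := fun z hz => by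
      rw [eval_mul]; exact mul_ne_zero (repQ_ne g₁ z hz) (repQ_ne g₂ z hz)
    have hrep : ∀ z : K, (g₁.1 - g₂.1) z
        = ratFun (repP g₁ * repQ g₂ - repP g₂ * repQ g₁) (repQ g₁ * repQ g₂) (z : ℂ) := by
      intro z
      rw [ContinuousMap.sub_apply, rep_spec g₁ z, rep_spec g₂ z]
      simp only [ratFun_apply, eval_mul, eval_sub]
      rw [div_sub_div _ _ (repQ_ne g₁ z z.2) (repQ_ne g₂ z z.2)]
      ring_nf
    have hb := hC (repP g₁ * repQ g₂ - repP g₂ * repQ g₁) (repQ g₁ * repQ g₂) hqq'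
    rw [supNormOn_eq_norm ‹_› _ _ (f := g₁.1 - g₂.1) hrep] at hb
    rw [Complex.dist_eq, Subtype.dist_eq, dist_eq_norm]
    unfold delta0
    rw [hsub]
    exact hb
  refine LipschitzWith.uniformContinuous (K := C.toNNReal) ?_
  refine LipschitzWith.of_dist_le_mul fun x y => (key x y).trans ?_
  exact mul_le_mul_of_nonneg_right (Real.le_coe_toNNReal C) dist_nonneg

include ha in
lemma dExt_eq_delta (h : DeltaCont K a k) {f : C(K, ℂ)} (hf : f ∈ R0 K)
    (p q : Polynomial ℂ) (hq : ∀ z ∈ K, q.eval z ≠ 0)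
    (hrep : ∀ z : K, f z = ratFun p q (z : ℂ)) :
    dExt K a k f = deltaVal k (ratFun p q) a := by
  have h1 : dExt K a k f = delta0 K a k ⟨f, hf⟩ := by
    rw [dExt_of_mem K a k (subset_closure hf)]
    exact uniformly_extend_of_ind (iota_isometry K).isUniformInducing
      (iota_denseRange K) (delta0_uniformContinuous ha h) ⟨f, hf⟩
  rw [h1]
  exact deltaVal_welldef ha h _ _ p q (repQ_ne ⟨f, hf⟩) hq
    (fun z => (rep_spec ⟨f, hf⟩ z).symm.trans (hrep z))

include ha in
lemma dExt_continuous (h : DeltaCont K a k) :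
    Continuous fun x : ↥(RK K) => dExt K a k x.1 := by
  have heq : (fun x : ↥(RK K) => dExt K a k x.1) = dExtAux K a k := by
    funext x
    rw [dExt_of_mem K a k x.2]
  rw [heq]
  exact (uniformContinuous_uniformly_extend (iota_isometry K).isUniformInducing
    (iota_denseRange K) (delta0_uniformContinuous ha h)).continuous

end Ext

end Lem28
namespace Lem28
open Polynomial

variable {K : Set ℂ}

section Back
variable [Nonempty K] [CompactSpace K] {a : ℂ} (ha : a ∈ K)

include ha in
lemma deltaCont_zero : DeltaCont K a 0 := by
  refine ⟨1, fun p q hq => ?_⟩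
  rw [deltaVal_zero', supNormOn_eq_norm ‹_› p q (f := ratRes K p q hq) (fun z => rfl), one_mul]
  calc ‖ratFun p q a‖ = ‖(ratRes K p q hq) ⟨a, ha⟩‖ := rfl
    _ ≤ ‖ratRes K p q hq‖ := ContinuousMap.norm_coe_le_norm _ _

include ha in
lemma deltaCont_down {m k : ℕ} (hkm : k ≤ m) (h : DeltaCont K a m) : DeltaCont K a k := by
  obtain ⟨Cm, hC0, hC⟩ := deltaCont_bound (a := a) h
  set e := m - k with he
  refine ⟨Cm * ‖zamMap K a e‖, fun p q hq => ?_⟩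
  have hone : (1 : Polynomial ℂ).eval a ≠ 0 := by simp
  have key : deltaVal k (ratFun p q) a
      = deltaVal m (ratFun (p * (X - C a) ^ e) q) a := by
    have h1 : deltaVal m (ratFun (p * (X - C a) ^ e) (q * 1)) a
        = ∑ j ∈ Finset.range (m+1),
            deltaVal j (ratFun p q) a * deltaVal (m-j) (ratFun ((X - C a) ^ e) 1) a :=
      deltaVal_mul_rat p q ((X - C a) ^ e) 1 m (hq a ha) hone
    rw [mul_one] at h1
    rw [h1, Finset.sum_eq_single_of_mem k (by simp [Nat.lt_succ_iff, hkm])]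
    · rw [deltaVal_zam, if_pos rfl, mul_one]
    · intro j hj hjk
      rw [Finset.mem_range, Nat.lt_succ_iff] at hj
      rw [deltaVal_zam, if_neg (by omega), mul_zero]
  rw [key]
  have hb := hC (p * (X - C a) ^ e) q hq
  have hrepm : ∀ z : K, (ratRes K p q hq * zamMap K a e) z
      = ratFun (p * (X - C a) ^ e) q (z : ℂ) := by
    intro z
    rw [ContinuousMap.mul_apply]
    show ratFun p q (z : ℂ) * ((z : ℂ) - a) ^ e = _
    simp only [ratFun_apply, eval_mul, eval_pow, eval_sub, eval_X, eval_C]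
    rw [mul_div_right_comm]
  rw [supNormOn_eq_norm ‹_› _ _ (f := ratRes K p q hq * zamMap K a e) hrepm] at hb
  refine hb.trans ?_
  rw [supNormOn_eq_norm ‹_› p q (f := ratRes K p q hq) (fun z => rfl)]
  calc Cm * ‖ratRes K p q hq * zamMap K a e‖
      ≤ Cm * (‖ratRes K p q hq‖ * ‖zamMap K a e‖) :=
        mul_le_mul_of_nonneg_left (norm_mul_le _ _) hC0
    _ = Cm * ‖zamMap K a e‖ * ‖ratRes K p q hq‖ := by ring

omit [Nonempty K] [CompactSpace K] in
/-- extension principle on `RK` (one variable) -/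
lemma eqOn_RK {φ ψ : ↥(RK K) → ℂ} (hφ : Continuous φ) (hψ : Continuous ψ)
    (h : ∀ g : ↥(R0 K), φ (iota K g) = ψ (iota K g)) (x : ↥(RK K)) : φ x = ψ x := by
  have hsub : Set.range (iota K) ⊆ {y | φ y = ψ y} := by rintro - ⟨g, rfl⟩; exact h g
  have h2 := closure_mono hsub (iota_denseRange K x)
  rwa [(isClosed_eq hφ hψ).closure_eq] at h2

omit [Nonempty K] [CompactSpace K] in
/-- extension principle on `RK × RK` -/
lemma eqOn_RK2 {φ ψ : ↥(RK K) × ↥(RK K) → ℂ} (hφ : Continuous φ) (hψ : Continuous ψ)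
    (h : ∀ g₁ g₂ : ↥(R0 K), φ (iota K g₁, iota K g₂) = ψ (iota K g₁, iota K g₂))
    (x : ↥(RK K) × ↥(RK K)) : φ x = ψ x := by
  have hd : DenseRange (Prod.map (iota K) (iota K)) :=
    (iota_denseRange K).prodMap (iota_denseRange K)
  have hsub : Set.range (Prod.map (iota K) (iota K)) ⊆ {y | φ y = ψ y} := by
    rintro - ⟨⟨g₁, g₂⟩, rfl⟩; exact h g₁ g₂
  have h2 := closure_mono hsub (hd x)
  rwa [(isClosed_eq hφ hψ).closure_eq] at h2

include ha in
lemma dExt_d0 : ∀ f ∈ RK K, ∀ h : a ∈ K, dExt K a 0 f = f ⟨a, h⟩ := by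
  intro f hf h
  have h0 := deltaCont_zero ha
  have := eqOn_RK (φ := fun x : ↥(RK K) => dExt K a 0 x.1)
    (ψ := fun x : ↥(RK K) => x.1 ⟨a, ha⟩)
    (dExt_continuous ha h0)
    (by exact (ContinuousEvalConst.continuous_eval_const (⟨a, ha⟩ : K)).comp continuous_subtype_val)
    (fun g => by
      show dExt K a 0 g.1 = g.1 ⟨a, ha⟩
      rw [dExt_eq_delta ha h0 g.2 (repP g) (repQ g) (repQ_ne g) (rep_spec g),
        deltaVal_zero', ← rep_spec g ⟨a, ha⟩]) ⟨f, hf⟩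
  exact this

include ha in
lemma dExt_add {k : ℕ} (hk : DeltaCont K a k) :
    ∀ f ∈ RK K, ∀ g ∈ RK K, dExt K a k (f + g) = dExt K a k f + dExt K a k g := by
  intro f hf g hg
  have hcont1 : Continuous fun x : ↥(RK K) × ↥(RK K) => dExt K a k (x.1.1 + x.2.1) := by
    have hmap : Continuous fun x : ↥(RK K) × ↥(RK K) =>
        (⟨x.1.1 + x.2.1, RK_add x.1.2 x.2.2⟩ : ↥(RK K)) :=
      Continuous.subtype_mk ((continuous_subtype_val.comp continuous_fst).add
        (continuous_subtype_val.comp continuous_snd)) _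
    exact (dExt_continuous ha hk).comp hmap
  have hcont2 : Continuous fun x : ↥(RK K) × ↥(RK K) => dExt K a k x.1.1 + dExt K a k x.2.1 :=
    ((dExt_continuous ha hk).comp continuous_fst).add
      ((dExt_continuous ha hk).comp continuous_snd)
  have := eqOn_RK2 hcont1 hcont2 (fun g₁ g₂ => ?_) (⟨f, hf⟩, ⟨g, hg⟩)
  · exact this
  show dExt K a k (g₁.1 + g₂.1) = dExt K a k g₁.1 + dExt K a k g₂.1
  have hrep : ∀ z : K, (g₁.1 + g₂.1) z
      = ratFun (repP g₁ * repQ g₂ + repP g₂ * repQ g₁) (repQ g₁ * repQ g₂) (z : ℂ) := by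
    intro z
    rw [ContinuousMap.add_apply, rep_spec g₁ z, rep_spec g₂ z,
      ratFun_add_point _ _ _ _ (repQ_ne g₁ z z.2) (repQ_ne g₂ z z.2)]
  rw [dExt_eq_delta ha hk (R0_add g₁.2 g₂.2) _ _ (fun z hz => by
      rw [eval_mul]; exact mul_ne_zero (repQ_ne g₁ z hz) (repQ_ne g₂ z hz)) hrep,
    deltaVal_add_rat _ _ _ _ k (repQ_ne g₁ a ha) (repQ_ne g₂ a ha),
    dExt_eq_delta ha hk g₁.2 _ _ (repQ_ne g₁) (rep_spec g₁),
    dExt_eq_delta ha hk g₂.2 _ _ (repQ_ne g₂) (rep_spec g₂)]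

include ha in
lemma dExt_smul {k : ℕ} (hk : DeltaCont K a k) :
    ∀ (c : ℂ), ∀ f ∈ RK K, dExt K a k (c • f) = c * dExt K a k f := by
  intro c f hf
  have hcont1 : Continuous fun x : ↥(RK K) => dExt K a k (c • x.1) := by
    have hmap : Continuous fun x : ↥(RK K) => (⟨c • x.1, RK_smul c x.2⟩ : ↥(RK K)) :=
      Continuous.subtype_mk (continuous_subtype_val.const_smul c) _
    exact (dExt_continuous ha hk).comp hmap
  have hcont2 : Continuous fun x : ↥(RK K) => c * dExt K a k x.1 :=
    continuous_const.mul (dExt_continuous ha hk)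
  refine eqOn_RK hcont1 hcont2 (fun g => ?_) ⟨f, hf⟩
  show dExt K a k (c • g.1) = c * dExt K a k g.1
  have hrep : ∀ z : K, (c • g.1) z = ratFun (C c * repP g) (repQ g) (z : ℂ) := by
    intro z
    rw [ContinuousMap.smul_apply, rep_spec g z, ratFun_smul_point]
    rfl
  rw [dExt_eq_delta ha hk (R0_smul c g.2) _ _ (repQ_ne g) hrep,
    deltaVal_smul_rat c _ _ k (repQ_ne g a ha),
    dExt_eq_delta ha hk g.2 _ _ (repQ_ne g) (rep_spec g)]

include ha in
lemma dExt_mul {k : ℕ} (hk : ∀ j ≤ k, DeltaCont K a j) :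
    ∀ f ∈ RK K, ∀ g ∈ RK K, dExt K a k (f * g)
      = ∑ j ∈ Finset.range (k + 1), dExt K a j f * dExt K a (k - j) g := by
  intro f hf g hg
  have hkk := hk k le_rfl
  have hcont1 : Continuous fun x : ↥(RK K) × ↥(RK K) => dExt K a k (x.1.1 * x.2.1) := by
    have hmap : Continuous fun x : ↥(RK K) × ↥(RK K) =>
        (⟨x.1.1 * x.2.1, RK_mul x.1.2 x.2.2⟩ : ↥(RK K)) :=
      Continuous.subtype_mk ((continuous_subtype_val.comp continuous_fst).mul
        (continuous_subtype_val.comp continuous_snd)) _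
    exact (dExt_continuous ha hkk).comp hmap
  have hcont2 : Continuous fun x : ↥(RK K) × ↥(RK K) =>
      ∑ j ∈ Finset.range (k + 1), dExt K a j x.1.1 * dExt K a (k - j) x.2.1 := by
    refine continuous_finset_sum _ (fun j hj => ?_)
    rw [Finset.mem_range, Nat.lt_succ_iff] at hj
    exact ((dExt_continuous ha (hk j hj)).comp continuous_fst).mul
      ((dExt_continuous ha (hk (k - j) (Nat.sub_le k j))).comp continuous_snd)
  refine eqOn_RK2 hcont1 hcont2 (fun g₁ g₂ => ?_) (⟨f, hf⟩, ⟨g, hg⟩)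
  show dExt K a k (g₁.1 * g₂.1) = ∑ j ∈ Finset.range (k + 1),
    dExt K a j g₁.1 * dExt K a (k - j) g₂.1
  have hrep : ∀ z : K, (g₁.1 * g₂.1) z
      = ratFun (repP g₁ * repP g₂) (repQ g₁ * repQ g₂) (z : ℂ) := by
    intro z
    rw [ContinuousMap.mul_apply, rep_spec g₁ z, rep_spec g₂ z, ratFun_mul_point]
  rw [dExt_eq_delta ha hkk (R0_mul g₁.2 g₂.2) _ _ (fun z hz => by
      rw [eval_mul]; exact mul_ne_zero (repQ_ne g₁ z hz) (repQ_ne g₂ z hz)) hrep,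
    deltaVal_mul_rat _ _ _ _ k (repQ_ne g₁ a ha) (repQ_ne g₂ a ha)]
  refine Finset.sum_congr rfl (fun j hj => ?_)
  rw [Finset.mem_range, Nat.lt_succ_iff] at hj
  rw [dExt_eq_delta ha (hk j hj) g₁.2 _ _ (repQ_ne g₁) (rep_spec g₁),
    dExt_eq_delta ha (hk (k - j) (Nat.sub_le k j)) g₂.2 _ _ (repQ_ne g₂) (rep_spec g₂)]

include ha in
lemma dExt_zam_one (h1 : DeltaCont K a 1) : dExt K a 1 (zamMap K a 1) = 1 := by
  have hrep : ∀ z : K, (zamMap K a 1) z = ratFun ((X - C a) ^ 1) 1 (z : ℂ) := by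
    intro z
    show ((z : ℂ) - a) ^ 1 = _
    simp [ratFun_apply, eval_pow]
  rw [dExt_eq_delta ha h1 (zamMap_mem a 1) _ _ (fun z _ => by simp) hrep, deltaVal_zam, if_pos rfl]

include ha in
lemma backward_gen {P : ℕ → Prop} (hPdown : ∀ j k, j ≤ k → P k → P j)
    (hdc : ∀ k, P k → DeltaCont K a k) (hP1 : P 1) :
    (∀ f ∈ RK K, ∀ h : a ∈ K, dExt K a 0 f = f ⟨a, h⟩) ∧
    (∀ k, P k → ∀ f ∈ RK K, ∀ g ∈ RK K, dExt K a k (f + g) = dExt K a k f + dExt K a k g) ∧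
    (∀ k, P k → ∀ c : ℂ, ∀ f ∈ RK K, dExt K a k (c • f) = c * dExt K a k f) ∧
    (∀ k, P k → ∀ f ∈ RK K, ∀ g ∈ RK K, dExt K a k (f * g)
        = ∑ j ∈ Finset.range (k + 1), dExt K a j f * dExt K a (k - j) g) ∧
    (∀ k, P k → Continuous fun f : RK K => dExt K a k f.1) ∧
    (∃ f ∈ RK K, dExt K a 1 f ≠ 0) := by
  refine ⟨dExt_d0 ha, fun k hPk => dExt_add ha (hdc k hPk),
    fun k hPk c => dExt_smul ha (hdc k hPk) c,
    fun k hPk => dExt_mul ha (fun j hj => hdc j (hPdown j k hj hPk)),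
    fun k hPk => dExt_continuous ha (hdc k hPk),
    ⟨zamMap K a 1, subset_closure (zamMap_mem a 1), by
      rw [dExt_zam_one ha (hdc 1 hP1)]; exact one_ne_zero⟩⟩

end Back

end Lem28
namespace Lem28
open Polynomial

variable {K : Set ℂ}

lemma deltaVal_poly_add (u v : Polynomial ℂ) (j : ℕ) (a : ℂ) :
    deltaVal j (ratFun (u + v) 1) a = deltaVal j (ratFun u 1) a + deltaVal j (ratFun v 1) a := by
  have h : (1 : Polynomial ℂ).eval a ≠ 0 := by simp
  have := deltaVal_add_rat u 1 v 1 j h h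
  simpa using this

lemma deltaVal_poly_zero (j : ℕ) (a : ℂ) : deltaVal j (ratFun (0 : Polynomial ℂ) 1) a = 0 := by
  rw [deltaVal_poly]
  simp [iterate_derivative_zero]

lemma deltaVal_poly_sum {ι : Type*} (s : Finset ι) (F : ι → Polynomial ℂ) (j : ℕ) (a : ℂ) :
    deltaVal j (ratFun (∑ i ∈ s, F i) 1) a = ∑ i ∈ s, deltaVal j (ratFun (F i) 1) a := by
  classical
  induction s using Finset.induction_on with
  | empty => simpa using deltaVal_poly_zero j a
  | @insert _ _ hns ih =>
    rw [Finset.sum_insert hns, Finset.sum_insert hns, deltaVal_poly_add, ih]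

lemma deltaVal_poly_smul (c : ℂ) (u : Polynomial ℂ) (j : ℕ) (a : ℂ) :
    deltaVal j (ratFun (C c * u) 1) a = c * deltaVal j (ratFun u 1) a :=
  deltaVal_smul_rat c u 1 j (by simp)

/-- δ of the Taylor polynomial built from coefficients of `p/q` -/
lemma deltaVal_T (k i : ℕ) (hik : i ≤ k) (c : ℕ → ℂ) (a : ℂ) :
    deltaVal i (ratFun (∑ j ∈ Finset.range (k+1), C (c j) * (X - C a) ^ j) 1) a = c i := by
  rw [deltaVal_poly_sum]
  rw [Finset.sum_eq_single_of_mem i (Finset.mem_range.mpr (Nat.lt_succ_of_le hik))]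
  · rw [deltaVal_poly_smul, deltaVal_zam, if_pos rfl, mul_one]
  · intro j _ hji
    rw [deltaVal_poly_smul, deltaVal_zam, if_neg (fun h => hji h.symm), mul_zero]

/-- products with `q`: Leibniz at the level of polynomials -/
lemma deltaVal_mul_q (u q : Polynomial ℂ) (j : ℕ) {a : ℂ} :
    deltaVal j (ratFun (u * q) 1) a
      = ∑ i ∈ Finset.range (j+1),
          deltaVal i (ratFun u 1) a * deltaVal (j-i) (ratFun q 1) a := by
  have h1 : (1 : Polynomial ℂ).eval a ≠ 0 := by simp
  have := deltaVal_mul_rat u 1 q 1 j h1 h1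
  simpa using this

/-- `δ_j(p) = Σ δ_i(p/q) δ_{j-i}(q)` -/
lemma deltaVal_p_conv (p q : Polynomial ℂ) (j : ℕ) {a : ℂ} (hqa : q.eval a ≠ 0) :
    deltaVal j (ratFun p 1) a
      = ∑ i ∈ Finset.range (j+1),
          deltaVal i (ratFun p q) a * deltaVal (j-i) (ratFun q 1) a := by
  have h1 : (1 : Polynomial ℂ).eval a ≠ 0 := by simp
  have hcongr : deltaVal j (ratFun p 1) a
      = deltaVal j (fun w => ratFun p q w * ratFun q 1 w) a := by
    refine deltaVal_congr j ?_
    filter_upwards [ev_ne q hqa] with w hw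
    rw [ratFun_apply, ratFun_apply, ratFun_apply, eval_one, div_one, div_one,
      div_mul_cancel₀ _ hw]
  rw [hcongr, deltaVal_mul p q q 1 j hqa h1]

/-- Taylor division: `p = T·q + (X-a)^{k+1}·r` where `T` is the Taylor polynomial of `p/q`. -/
lemma taylor_div (p q : Polynomial ℂ) {a : ℂ} (hqa : q.eval a ≠ 0) (k : ℕ) :
    ∃ r : Polynomial ℂ,
      p = (∑ j ∈ Finset.range (k+1), C (deltaVal j (ratFun p q) a) * (X - C a) ^ j) * q
          + (X - C a) ^ (k+1) * r := by
  set T : Polynomial ℂ :=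
    ∑ j ∈ Finset.range (k+1), C (deltaVal j (ratFun p q) a) * (X - C a) ^ j with hT
  set h : Polynomial ℂ := p - T * q with hh
  -- δ_j(h) = 0 for j ≤ k
  have hdelta : ∀ j ≤ k, deltaVal j (ratFun h 1) a = 0 := by
    intro j hjk
    have hsub : deltaVal j (ratFun h 1) a
        = deltaVal j (ratFun p 1) a - deltaVal j (ratFun (T * q) 1) a := by
      have h1 : (1 : Polynomial ℂ).eval a ≠ 0 := by simp
      have := deltaVal_sub_rat p 1 (T * q) 1 j h1 h1
      rw [mul_one, mul_one, one_mul] at this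
      rw [hh]
      exact this.symm
    have hTq : deltaVal j (ratFun (T * q) 1) a
        = ∑ i ∈ Finset.range (j+1),
            deltaVal i (ratFun T 1) a * deltaVal (j-i) (ratFun q 1) a :=
      deltaVal_mul_q T q j
    have hTi : ∀ i ∈ Finset.range (j+1),
        deltaVal i (ratFun T 1) a * deltaVal (j-i) (ratFun q 1) a
        = deltaVal i (ratFun p q) a * deltaVal (j-i) (ratFun q 1) a := by
      intro i hi
      rw [Finset.mem_range, Nat.lt_succ_iff] at hi
      rw [hT, deltaVal_T k i (hi.trans hjk)]
    rw [hsub, hTq, Finset.sum_congr rfl hTi, deltaVal_p_conv p q j hqa, sub_self]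
  -- hence the Taylor coefficients of h at a vanish up to order k
  have hcoeff : ∀ j ≤ k, (Polynomial.taylor a h).coeff j = 0 := by
    intro j hjk
    rw [taylor_coeff]
    have hfac := congrFun (factorial_smul_hasseDeriv (R := ℂ) j) h
    have heval : (j.factorial : ℂ) * (hasseDeriv j h).eval a
        = ((Polynomial.derivative)^[j] h).eval a := by
      rw [← hfac]
      simp [nsmul_eq_mul]
    have hd := hdelta j hjk
    rw [deltaVal_poly] at hd
    have hfne : (j.factorial : ℂ) ≠ 0 := Nat.cast_ne_zero.mpr j.factorial_ne_zero
    have : ((Polynomial.derivative)^[j] h).eval a = 0 := by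
      field_simp at hd
      simpa using hd
    rw [this] at heval
    exact (mul_eq_zero.mp heval).resolve_left hfne
  -- divisibility
  have hdvd : (X - C a) ^ (k+1) ∣ h := by
    conv_rhs => rw [← Polynomial.sum_taylor_eq h a]
    rw [Polynomial.sum_def]
    refine Finset.dvd_sum fun i hi => ?_
    rcases le_or_gt i k with hik | hik
    · rw [hcoeff i hik, map_zero, zero_mul]
      exact dvd_zero _
    · exact Dvd.dvd.mul_left (pow_dvd_pow _ hik) _
  obtain ⟨r, hr⟩ := hdvd
  exact ⟨r, by rw [← hr, hh]; ring⟩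

end Lem28
namespace Lem28
open Polynomial

variable {K : Set ℂ}

section Forward
variable [Nonempty K] [CompactSpace K] {a : ℂ} {m : ℕ} {d : ℕ → C(K, ℂ) → ℂ}

lemma RK_sum (s : Finset ℕ) (F : ℕ → C(K, ℂ)) (hF : ∀ j ∈ s, F j ∈ RK K) :
    (∑ j ∈ s, F j) ∈ RK K :=
  Finset.sum_induction F (· ∈ RK K) (fun _ _ => RK_add) RK_zero hF

lemma d_zero (hsmul : ∀ k ≤ m, ∀ c : ℂ, ∀ f ∈ RK K, d k (c • f) = c * d k f)
    {k : ℕ} (hk : k ≤ m) : d k (0 : C(K, ℂ)) = 0 := by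
  have h := hsmul k hk 0 0 RK_zero
  rwa [zero_smul, zero_mul] at h

lemma d_bound (hsmul : ∀ k ≤ m, ∀ c : ℂ, ∀ f ∈ RK K, d k (c • f) = c * d k f)
    (hcont : ∀ k ≤ m, Continuous fun f : RK K => d k f.1)
    {k : ℕ} (hk : k ≤ m) :
    ∃ C : ℝ, 0 ≤ C ∧ ∀ f, f ∈ RK K → ‖d k f‖ ≤ C * ‖f‖ := by
  have h0 : d k (0 : C(K, ℂ)) = 0 := d_zero hsmul hk
  have hCA : ContinuousAt (fun f : RK K => d k f.1) ⟨0, RK_zero⟩ :=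
    (hcont k hk).continuousAt
  rw [Metric.continuousAt_iff] at hCA
  obtain ⟨δ, hδ, hball⟩ := hCA 1 one_pos
  refine ⟨2/δ, by positivity, fun f hf => ?_⟩
  rcases eq_or_ne f 0 with rfl | hf0
  · rw [h0]
    simp
  have hnf : 0 < ‖f‖ := norm_pos_iff.mpr hf0
  set cR : ℝ := δ/(2*‖f‖) with hcR
  have hcpos : 0 < cR := by positivity
  have hmem : (cR : ℂ) • f ∈ RK K := RK_smul _ hf
  have hdist : dist (⟨(cR : ℂ) • f, hmem⟩ : RK K) ⟨0, RK_zero⟩ < δ := by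
    rw [Subtype.dist_eq, dist_eq_norm, sub_zero, norm_smul, Complex.norm_real,
      Real.norm_eq_abs, abs_of_pos hcpos, hcR]
    rw [mul_comm]
    have key : ‖f‖ * (δ/(2*‖f‖)) = δ/2 := by
      field_simp
    rw [key]
    linarith
  have h1 := hball hdist
  simp only at h1
  rw [hsmul k hk _ f hf, h0, dist_zero_right] at h1
  rw [norm_mul, Complex.norm_real, Real.norm_eq_abs, abs_of_pos hcpos] at h1
  have h2 : ‖d k f‖ = ‖d k f‖ := rfl
  rw [h2]
  have h3 : ‖d k f‖ < 1 / cR := by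
    rw [lt_div_iff₀ hcpos, mul_comm]
    exact h1
  have h4 : 1 / cR = 2/δ * ‖f‖ := by
    rw [hcR]
    field_simp
  linarith [h3, h4.symm ▸ h3]

lemma d_zam_lt (ha : a ∈ K)
    (hd0 : ∀ f ∈ RK K, ∀ h : a ∈ K, d 0 f = f ⟨a, h⟩)
    (hmul : ∀ k, 1 ≤ k → k ≤ m → ∀ f ∈ RK K, ∀ g ∈ RK K,
      d k (f * g) = ∑ j ∈ Finset.range (k + 1), d j f * d (k - j) g) :
    ∀ n j, j < n → j ≤ m → d j (zamMap K a n) = 0 := by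
  intro n
  induction n with
  | zero => intro j hj _; exact absurd hj (Nat.not_lt_zero j)
  | succ n ih =>
    intro j hj hjm
    rcases Nat.eq_zero_or_pos j with rfl | hj1
    · rw [hd0 _ (subset_closure (zamMap_mem a (n+1))) ha]
      show (((⟨a, ha⟩ : K) : ℂ) - a) ^ (n+1) = 0
      rw [Subtype.coe_mk, sub_self, zero_pow (Nat.succ_ne_zero n)]
    · rw [zamMap_succ, hmul j hj1 hjm _ (subset_closure (zamMap_mem a n))
        _ (subset_closure (zamMap_mem a 1))]
      refine Finset.sum_eq_zero fun i hi => ?_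
      rw [Finset.mem_range, Nat.lt_succ_iff] at hi
      rcases lt_or_ge i n with hin | hin
      · rw [ih i hin (hi.trans hjm), zero_mul]
      · have hji : j - i = 0 := by omega
        rw [hji, hd0 _ (subset_closure (zamMap_mem a 1)) ha]
        have hz : (zamMap K a 1) (⟨a, ha⟩ : K) = 0 := by simp [zamMap]
        rw [hz, mul_zero]

lemma d_one_eq (ha : a ∈ K)
    (hd0 : ∀ f ∈ RK K, ∀ h : a ∈ K, d 0 f = f ⟨a, h⟩)
    (hmul : ∀ k, 1 ≤ k → k ≤ m → ∀ f ∈ RK K, ∀ g ∈ RK K,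
      d k (f * g) = ∑ j ∈ Finset.range (k + 1), d j f * d (k - j) g) :
    ∀ k, 1 ≤ k → k ≤ m → d k (1 : C(K, ℂ)) = 0 := by
  intro k
  induction k using Nat.strong_induction_on with
  | _ k IH =>
    intro hk1 hkm
    have h1K : (1 : C(K, ℂ)) ∈ RK K := subset_closure R0_one
    have hval : d 0 (1 : C(K, ℂ)) = 1 := by
      rw [hd0 _ h1K ha]; rfl
    have hS := hmul k hk1 hkm 1 h1K 1 h1K
    rw [one_mul, Finset.sum_range_succ, Nat.sub_self, hval, mul_one] at hS
    have hmid : ∑ j ∈ Finset.range k, d j 1 * d (k - j) 1 = d k 1 := by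
      rw [Finset.sum_eq_single_of_mem 0 (Finset.mem_range.mpr hk1)]
      · rw [hval, one_mul, Nat.sub_zero]
      · intro j hj hj0
        rw [IH j (Finset.mem_range.mp hj) (Nat.one_le_iff_ne_zero.mpr hj0)
          ((Finset.mem_range.mp hj).le.trans hkm), zero_mul]
    rw [hmid] at hS
    exact left_eq_add.mp hS

lemma d_zam_diag (ha : a ∈ K)
    (hd0 : ∀ f ∈ RK K, ∀ h : a ∈ K, d 0 f = f ⟨a, h⟩)
    (hmul : ∀ k, 1 ≤ k → k ≤ m → ∀ f ∈ RK K, ∀ g ∈ RK K,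
      d k (f * g) = ∑ j ∈ Finset.range (k + 1), d j f * d (k - j) g) :
    ∀ k, 1 ≤ k → k ≤ m → d k (zamMap K a k) = (d 1 (zamMap K a 1)) ^ k := by
  intro k hk1
  induction k, hk1 using Nat.le_induction with
  | base => intro _; rw [pow_one]
  | succ n hn IH =>
    intro hnm
    have hnm' : n ≤ m := by omega
    rw [zamMap_succ, hmul (n+1) (by omega) hnm _ (subset_closure (zamMap_mem a n))
      _ (subset_closure (zamMap_mem a 1))]
    rw [Finset.sum_eq_single_of_mem n (Finset.mem_range.mpr (by omega))]
    · rw [Nat.add_sub_cancel_left, IH hnm', pow_succ]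
    · intro i hi hin
      rw [Finset.mem_range, Nat.lt_succ_iff] at hi
      rcases lt_or_ge i n with h' | h'
      · rw [d_zam_lt ha hd0 hmul n i h' (by omega), zero_mul]
      · have : i = n + 1 := by omega
        subst this
        rw [Nat.sub_self, hd0 _ (subset_closure (zamMap_mem a 1)) ha]
        have hz : (zamMap K a 1) (⟨a, ha⟩ : K) = 0 := by simp [zamMap]
        rw [hz, mul_zero]

lemma d_sum (hadd : ∀ k ≤ m, ∀ f ∈ RK K, ∀ g ∈ RK K, d k (f + g) = d k f + d k g)
    (hsmul : ∀ k ≤ m, ∀ c : ℂ, ∀ f ∈ RK K, d k (c • f) = c * d k f)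
    {k : ℕ} (hk : k ≤ m) (s : Finset ℕ) (F : ℕ → C(K, ℂ)) (hF : ∀ j ∈ s, F j ∈ RK K) :
    d k (∑ j ∈ s, F j) = ∑ j ∈ s, d k (F j) := by
  classical
  induction s using Finset.induction_on with
  | empty => simpa using d_zero hsmul hk
  | @insert i s his ih =>
    rw [Finset.sum_insert his, Finset.sum_insert his,
      hadd k hk _ (hF i (Finset.mem_insert_self i s)) _
        (RK_sum s F (fun j hj => hF j (Finset.mem_insert_of_mem hj))),
      ih (fun j hj => hF j (Finset.mem_insert_of_mem hj))]

lemma d_decomp (ha : a ∈ K)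
    (hd0 : ∀ f ∈ RK K, ∀ h : a ∈ K, d 0 f = f ⟨a, h⟩)
    (hadd : ∀ k ≤ m, ∀ f ∈ RK K, ∀ g ∈ RK K, d k (f + g) = d k f + d k g)
    (hsmul : ∀ k ≤ m, ∀ c : ℂ, ∀ f ∈ RK K, d k (c • f) = c * d k f)
    (hmul : ∀ k, 1 ≤ k → k ≤ m → ∀ f ∈ RK K, ∀ g ∈ RK K,
      d k (f * g) = ∑ j ∈ Finset.range (k + 1), d j f * d (k - j) g)
    {k : ℕ} (hk1 : 1 ≤ k) (hkm : k ≤ m) (p q : Polynomial ℂ)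
    (hq : ∀ z ∈ K, q.eval z ≠ 0) :
    d k (ratRes K p q hq) = ∑ j ∈ Finset.range (k+1),
      deltaVal j (ratFun p q) a * d k (zamMap K a j) := by
  obtain ⟨r, hr⟩ := taylor_div p q (hq a ha) k
  have hfun : ratRes K p q hq
      = (∑ j ∈ Finset.range (k+1), (deltaVal j (ratFun p q) a) • zamMap K a j)
        + zamMap K a (k+1) * ratRes K r q hq := by
    ext z
    have hz := hq z z.2
    have hev := congrArg (Polynomial.eval (z : ℂ)) hr
    rw [eval_add, eval_mul, eval_mul, eval_finset_sum] at hev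
    simp only [eval_mul, eval_pow, eval_sub, eval_X, eval_C] at hev
    show ratFun p q (z : ℂ) = _
    rw [ContinuousMap.add_apply, ContinuousMap.mul_apply, ContinuousMap.sum_apply]
    simp only [ContinuousMap.smul_apply, smul_eq_mul]
    show _ = (∑ j ∈ Finset.range (k+1), deltaVal j (ratFun p q) a * ((z:ℂ) - a) ^ j)
      + ((z:ℂ) - a) ^ (k+1) * ratFun r q (z : ℂ)
    rw [ratFun_apply, ratFun_apply]
    field_simp
    linear_combination hev
  have hzmem : ∀ j : ℕ, zamMap K a j ∈ RK K := fun j => subset_closure (zamMap_mem a j)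
  have hsummem : ∀ j ∈ Finset.range (k+1),
      (deltaVal j (ratFun p q) a) • zamMap K a j ∈ RK K :=
    fun j _ => RK_smul _ (hzmem j)
  rw [hfun, hadd k hkm _ (RK_sum _ _ hsummem) _
      (RK_mul (hzmem (k+1)) (subset_closure (ratRes_mem r q hq))),
    d_sum hadd hsmul hkm _ _ hsummem,
    hmul k hk1 hkm _ (hzmem (k+1)) _ (subset_closure (ratRes_mem r q hq))]
  have hzero : ∑ j ∈ Finset.range (k + 1),
      d j (zamMap K a (k+1)) * d (k - j) (ratRes K r q hq) = 0 := by
    refine Finset.sum_eq_zero fun j hj => ?_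
    rw [Finset.mem_range, Nat.lt_succ_iff] at hj
    rw [d_zam_lt ha hd0 hmul (k+1) j (by omega) (hj.trans hkm), zero_mul]
  rw [hzero, add_zero]
  refine Finset.sum_congr rfl fun j _ => ?_
  rw [hsmul k hkm _ _ (hzmem j)]

lemma lambda_ne (ha : a ∈ K) (hm : 1 ≤ m)
    (hd0 : ∀ f ∈ RK K, ∀ h : a ∈ K, d 0 f = f ⟨a, h⟩)
    (hadd : ∀ k ≤ m, ∀ f ∈ RK K, ∀ g ∈ RK K, d k (f + g) = d k f + d k g)
    (hsmul : ∀ k ≤ m, ∀ c : ℂ, ∀ f ∈ RK K, d k (c • f) = c * d k f)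
    (hmul : ∀ k, 1 ≤ k → k ≤ m → ∀ f ∈ RK K, ∀ g ∈ RK K,
      d k (f * g) = ∑ j ∈ Finset.range (k + 1), d j f * d (k - j) g)
    (hcont : ∀ k ≤ m, Continuous fun f : RK K => d k f.1)
    (hnd : ∃ f ∈ RK K, d 1 f ≠ 0) :
    d 1 (zamMap K a 1) ≠ 0 := by
  intro hl
  have hz : ∀ x : ↥(RK K), d 1 x.1 = (fun _ : ↥(RK K) => (0 : ℂ)) x := by
    refine eqOn_RK (hcont 1 hm) continuous_const (fun g => ?_)
    show d 1 g.1 = 0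
    have hg1 : g.1 = ratRes K (repP g) (repQ g) (repQ_ne g) :=
      ContinuousMap.ext (rep_spec g)
    rw [hg1, d_decomp ha hd0 hadd hsmul hmul le_rfl hm (repP g) (repQ g) (repQ_ne g)]
    rw [Finset.sum_range_succ, Finset.sum_range_one]
    rw [zamMap_zero_eq, d_one_eq ha hd0 hmul 1 le_rfl hm, hl]
    ring
  obtain ⟨f, hf, hne⟩ := hnd
  exact hne (hz ⟨f, hf⟩)

lemma forward (ha : a ∈ K) (hm : 1 ≤ m) (h : HasNBPD K a m) : DeltaCont K a m := by
  obtain ⟨d, ⟨hd0, hadd, hsmul, hmul⟩, hcont, hnd⟩ := h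
  suffices H : ∀ k, k ≤ m → DeltaCont K a k from H m le_rfl
  intro k
  induction k using Nat.strong_induction_on with
  | _ k IH =>
    intro hkm
    rcases Nat.eq_zero_or_pos k with rfl | hk1
    · exact deltaCont_zero ha
    have hCj : ∀ j : ℕ, ∃ Cj : ℝ, 0 ≤ Cj ∧ (j < k → ∀ p q : Polynomial ℂ,
        (∀ z ∈ K, q.eval z ≠ 0) →
        ‖deltaVal j (ratFun p q) a‖ ≤ Cj * supNormOn K (ratFun p q)) := by
      intro j
      by_cases hj : j < k
      · obtain ⟨Cj, hCj0, hb⟩ := deltaCont_bound (a := a) (IH j hj (hj.le.trans hkm))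
        exact ⟨Cj, hCj0, fun _ => hb⟩
      · exact ⟨0, le_rfl, fun hc => absurd hc hj⟩
    choose CF hCF0 hCFb using hCj
    obtain ⟨Cd, hCd0, hCdb⟩ := d_bound hsmul hcont hkm
    have hlam : d 1 (zamMap K a 1) ≠ 0 :=
      lambda_ne ha hm hd0 hadd hsmul hmul hcont hnd
    have hdiag := d_zam_diag ha hd0 hmul k hk1 hkm
    set lam := d 1 (zamMap K a 1) with hlamdef
    have hLpos : (0:ℝ) < ‖lam‖ ^ k :=
      pow_pos (norm_pos_iff.mpr hlam) k
    refine ⟨(Cd + ∑ j ∈ Finset.range k, ‖d k (zamMap K a j)‖ * CF j)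
      / (‖lam‖ ^ k), fun p q hq => ?_⟩
    have hs0 : supNormOn K (ratFun p q) = ‖ratRes K p q hq‖ :=
      supNormOn_eq_norm ‹_› p q (fun z => rfl)
    have hsnn : 0 ≤ supNormOn K (ratFun p q) := hs0 ▸ norm_nonneg _
    have hdec := d_decomp ha hd0 hadd hsmul hmul hk1 hkm p q hq
    rw [Finset.sum_range_succ] at hdec
    have hsolve : deltaVal k (ratFun p q) a
        = (d k (ratRes K p q hq) - ∑ j ∈ Finset.range k,
            deltaVal j (ratFun p q) a * d k (zamMap K a j)) / lam ^ k := by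
      rw [eq_div_iff (pow_ne_zero k hlam)]
      rw [← hdiag]
      linear_combination -hdec
    rw [hsolve]
    rw [norm_div, norm_pow, div_mul_eq_mul_div]
    gcongr ?_ / _
    rw [add_mul, Finset.sum_mul]
    refine (norm_sub_le _ _).trans (add_le_add ?_ ?_)
    · rw [hs0]; exact hCdb _ (subset_closure (ratRes_mem p q hq))
    · refine (norm_sum_le _ _).trans (Finset.sum_le_sum fun j hj => ?_)
      rw [Finset.mem_range] at hj
      rw [norm_mul]
      calc ‖deltaVal j (ratFun p q) a‖ * ‖d k (zamMap K a j)‖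
          ≤ (CF j * supNormOn K (ratFun p q)) * ‖d k (zamMap K a j)‖ :=
            mul_le_mul_of_nonneg_right (hCFb j hj p q hq) (norm_nonneg _)
        _ = ‖d k (zamMap K a j)‖ * CF j * supNormOn K (ratFun p q) := by ring

end Forward

end Lem28
namespace Lem28

variable {K : Set ℂ} [Nonempty K] [CompactSpace K] {a : ℂ}

lemma backward_fin (ha : a ∈ K) {m : ℕ} (hm : 1 ≤ m) (h : DeltaCont K a m) :
    HasNBPD K a m := by
  obtain ⟨B0, Badd, Bsmul, Bmul, Bcont, Bnd⟩ := backward_gen (K := K) ha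
    (P := fun k => k ≤ m) (fun j k hjk hk => hjk.trans hk)
    (fun k hk => deltaCont_down ha hk h) hm
  exact ⟨dExt K a, ⟨B0, fun k hk => Badd k hk, fun k hk c => Bsmul k hk c,
    fun k _ hkm => Bmul k hkm⟩, fun k hk => Bcont k hk, Bnd⟩

lemma backward_inf' (ha : a ∈ K) (h : ∀ m : ℕ, 1 ≤ m → DeltaCont K a m) :
    HasNBPDInf K a := by
  have hdc : ∀ k : ℕ, True → DeltaCont K a k := by
    intro k _
    match k with
    | 0 => exact deltaCont_zero ha
    | (k+1) => exact h (k+1) (Nat.succ_le_succ (Nat.zero_le k))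
  obtain ⟨B0, Badd, Bsmul, Bmul, Bcont, Bnd⟩ := backward_gen (K := K) ha
    (P := fun _ => True) (fun _ _ _ _ => trivial) hdc trivial
  exact ⟨dExt K a, ⟨B0, fun k => Badd k trivial, fun k c => Bsmul k trivial c,
    fun k _ => Bmul k trivial⟩, fun k => Bcont k trivial, Bnd⟩

end Lem28

/-- Lemma 2.8: there is a nondegenerate bounded point derivation of order `m` on `R(K)`
at `a` iff `δ_{a,m}` is continuous on `R₀(K)`; similarly for infinite order. -/
theorem derivation_iff_delta_cont (K : Set ℂ) (hne : K.Nonempty) (hK : IsCompact K)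
    (a : ℂ) (ha : a ∈ K) :
    (∀ m : ℕ, 1 ≤ m → (HasNBPD K a m ↔ DeltaCont K a m)) ∧
    (HasNBPDInf K a ↔ ∀ m : ℕ, 1 ≤ m → DeltaCont K a m) := by
  haveI : Nonempty K := hne.to_subtype
  haveI : CompactSpace K := isCompact_iff_compactSpace.mp hK
  constructor
  · intro m hm
    exact ⟨Lem28.forward ha hm, Lem28.backward_fin ha hm⟩
  · constructor
    · rintro ⟨d, ⟨h0, hadd, hsmul, hmul⟩, hcont, hnd⟩ m hm
      exact Lem28.forward ha hm ⟨d, ⟨h0, fun k _ => hadd k, fun k _ => hsmul k,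
        fun k hk1 _ => hmul k hk1⟩, fun k _ => hcont k, hnd⟩
    · exact Lem28.backward_inf' ha

end
end

section
/- Let a ∈ ℂ \ {0}, let 0 < r < |a|, set Δ = D(a,r) (so r(Δ) = r), and set s = s₀(Δ) = |a| − r > 0. Then there are two open discs Δ₁ and Δ₂ such that √Δ ⊆ Δ₁ ∪ Δ₂ and, for i = 1, 2: (a) s₀(Δᵢ) = √s; (b) r(Δᵢ) = √|a| − √s = r/(√|a| + √s) < r/(2√s); (c) for each m ∈ ℕ, r(Δᵢ)/s₀(Δᵢ)^{2m+1} < r/(2 s^{m+1}). -/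
open scoped ENNReal
open Metric Set Filter

noncomputable section

/-- Lemma 3.1: square roots of an open disc are covered by two discs with the stated
radii and distances to the origin. -/
theorem sqrt_of_disc (a : ℂ) (ha : a ≠ 0) (r : ℝ) (hr0 : 0 < r) (hr : r < ‖a‖)
    (s : ℝ) (hs : s = ‖a‖ - r) :
    ∃ (c₁ c₂ : ℂ) (r₁ r₂ : ℝ),
      sqrtSet (ball a r) ⊆ ball c₁ r₁ ∪ ball c₂ r₂ ∧
      |dist (0 : ℂ) c₁ - r₁| = Real.sqrt s ∧
      |dist (0 : ℂ) c₂ - r₂| = Real.sqrt s ∧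
      r₁ = Real.sqrt (‖a‖) - Real.sqrt s ∧
      r₂ = Real.sqrt (‖a‖) - Real.sqrt s ∧
      r₁ = r / (Real.sqrt (‖a‖) + Real.sqrt s) ∧
      r₂ = r / (Real.sqrt (‖a‖) + Real.sqrt s) ∧
      r₁ < r / (2 * Real.sqrt s) ∧
      r₂ < r / (2 * Real.sqrt s) ∧
      (∀ m : ℕ, 1 ≤ m →
        r₁ / |dist (0 : ℂ) c₁ - r₁| ^ (2 * m + 1) < r / (2 * s ^ (m + 1)) ∧
        r₂ / |dist (0 : ℂ) c₂ - r₂| ^ (2 * m + 1) < r / (2 * s ^ (m + 1))) := by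
  have hA0 : 0 < ‖a‖ := norm_pos_iff.mpr ha
  set A := ‖a‖ with hA
  have hs0 : 0 < s := by rw [hs]; linarith
  have hsA : s < A := by rw [hs]; linarith
  set α : ℂ := Complex.exp (Complex.log a / 2) with hαdef
  have hα2 : α ^ 2 = a := by
    rw [hαdef, ← Complex.exp_nat_mul]
    norm_num
    rw [show (2 : ℂ) * (Complex.log a / 2) = Complex.log a by ring, Complex.exp_log ha]
  have hαabs : ‖α‖ = Real.sqrt A := by
    rw [hαdef, Complex.norm_exp]
    have h1 : (Complex.log a / 2).re = Real.log A / 2 := by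
      simp [Complex.div_re, Complex.log_re, Complex.normSq, hA]
    rw [h1, ← Real.log_sqrt hA0.le, Real.exp_log (Real.sqrt_pos.mpr hA0)]
  set sa := Real.sqrt A with hsa
  set ss := Real.sqrt s with hss
  have hsa2 : sa ^ 2 = A := Real.sq_sqrt hA0.le
  have hss2 : ss ^ 2 = s := Real.sq_sqrt hs0.le
  have hss0 : 0 < ss := Real.sqrt_pos.mpr hs0
  have hsalt : ss < sa := Real.sqrt_lt_sqrt hs0.le hsA
  set ρ := sa - ss with hρdef
  have hρ0 : 0 < ρ := by simp [hρdef]; linarith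
  -- distances
  have hd1 : |dist (0 : ℂ) α - ρ| = ss := by
    rw [Complex.dist_eq, zero_sub, norm_neg, hαabs]
    rw [show sa - ρ = ss by rw [hρdef]; ring]
    exact abs_of_nonneg hss0.le
  have hd2 : |dist (0 : ℂ) (-α) - ρ| = ss := by
    rw [Complex.dist_eq, zero_sub, neg_neg, hαabs]
    rw [show sa - ρ = ss by rw [hρdef]; ring]
    exact abs_of_nonneg hss0.le
  -- radius equalities
  have hsum0 : 0 < sa + ss := by linarith
  have hprod : ρ * (sa + ss) = r := by
    have : ρ * (sa + ss) = sa ^ 2 - ss ^ 2 := by rw [hρdef]; ring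
    rw [this, hsa2, hss2, hs]; ring
  have hρdiv : ρ = r / (sa + ss) := by
    field_simp
    linarith [hprod]
  have hρlt : ρ < r / (2 * ss) := by
    rw [hρdiv]
    exact div_lt_div_of_pos_left hr0 (by linarith) (by linarith)
  -- covering
  have hcover : sqrtSet (ball a r) ⊆ ball α ρ ∪ ball (-α) ρ := by
    intro z hz
    have hz' : ‖z ^ 2 - a‖ < r := by
      simpa [sqrtSet, Metric.mem_ball, Complex.dist_eq] using hz
    by_contra hmem
    simp only [mem_union, Metric.mem_ball, not_or, not_lt, Complex.dist_eq,
      sub_neg_eq_add] at hmem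
    obtain ⟨hu, hv⟩ := hmem
    set u := ‖z - α‖ with hudef
    set v := ‖z + α‖ with hvdef
    have hu0 : 0 ≤ u := norm_nonneg _
    have hv0 : 0 ≤ v := norm_nonneg _
    have huv : u * v < r := by
      rw [hudef, hvdef, ← norm_mul, show (z - α) * (z + α) = z ^ 2 - a by
        rw [← hα2]; ring]
      exact hz'
    have hzsq : s < ‖z‖ ^ 2 := by
      have h2 : A - ‖z ^ 2‖ ≤ ‖z ^ 2 - a‖ := by
        have h3 := norm_sub_norm_le a (z ^ 2)
        calc A - ‖z ^ 2‖ ≤ ‖a - z ^ 2‖ := h3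
          _ = ‖z ^ 2 - a‖ := norm_sub_rev _ _
      rw [norm_pow] at h2
      rw [hs] at *
      linarith
    -- parallelogram law
    have hnα : Complex.normSq α = A := by
      rw [← Complex.sq_norm, hαabs, Real.sq_sqrt hA0.le]
    have hpar : u ^ 2 + v ^ 2 = 2 * ‖z‖ ^ 2 + 2 * A := by
      rw [hudef, hvdef, Complex.sq_norm, Complex.sq_norm, Complex.sq_norm, ← hnα]
      simp [Complex.normSq_apply]
      ring
    -- the quadratic argument
    have hid : ρ ^ 2 * (2 * s + 2 * A) - ρ ^ 4 = (A - s) ^ 2 := by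
      rw [hρdef, ← hsa2, ← hss2]; ring
    have hAsr : A - s = r := by rw [hs]; ring
    set B := ‖z‖ ^ 2 with hB
    clear_value A u v B
    clear hz hz' hudef hvdef hB hs hαabs hnα hd1 hd2 hρdiv hρlt hprod
    have hρu : ρ ^ 2 ≤ u ^ 2 := pow_le_pow_left₀ hρ0.le hu 2
    have hρv : ρ ^ 2 ≤ v ^ 2 := pow_le_pow_left₀ hρ0.le hv 2
    have hkey : 0 ≤ (u ^ 2 - ρ ^ 2) * (v ^ 2 - ρ ^ 2) :=
      mul_nonneg (by linarith) (by linarith)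
    have hsum : 2 * s + 2 * A < u ^ 2 + v ^ 2 := by rw [hpar]; linarith
    have huvnn : 0 ≤ u * v := mul_nonneg hu0 hv0
    have huv2 : (u * v) ^ 2 < (A - s) ^ 2 := by rw [hAsr]; gcongr
    have hmono := mul_le_mul_of_nonneg_left hsum.le (sq_nonneg ρ)
    nlinarith [hkey, huv2, hmono, hid]
  refine ⟨α, -α, ρ, ρ, hcover, hd1, hd2, hρdef, hρdef, hρdiv, hρdiv, hρlt, hρlt, ?_⟩
  intro m hm
  rw [hd1, hd2]
  have hpow : ss ^ (2 * m + 1) = s ^ m * ss := by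
    rw [pow_succ, pow_mul, hss2]
  have hX : 0 < s ^ m * ss := by positivity
  have hrhs : r / (2 * s ^ (m + 1)) = (r / (2 * ss)) / (s ^ m * ss) := by
    rw [div_div]
    congr 1
    rw [pow_succ]
    linear_combination (-2 * s ^ m) * hss2
  constructor <;>
  · rw [hpow, hrhs]
    exact (div_lt_div_iff_of_pos_right hX).mpr hρlt


end
end

section
/- For each m ∈ ℕ, there exists a sequence of open discs D(aₙ, rₙ) with centers aₙ on the positive real axis decreasing to 0, with pairwise disjoint closures contained in 𝔻, such that the road runner K = 𝔻̄ \ ⋃ₙ D(aₙ, rₙ) contains 0, the family {D(aₙ, rₙ)} satisfies the Browder condition of order m − 1 at the origin, but R(K) has no nondegenerate bounded point derivation of order m at the origin. -/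
open scoped ENNReal
open Metric Set Filter

noncomputable section

section Aux

open Polynomial in
/-- Restriction of a polynomial to `K` as a continuous map. -/
def polyMap (K : Set ℂ) (p : Polynomial ℂ) : C(K, ℂ) :=
  ⟨fun z => p.eval (z : ℂ), p.continuous.comp continuous_subtype_val⟩

lemma polyMap_apply (K : Set ℂ) (p : Polynomial ℂ) (z : K) :
    polyMap K p z = p.eval (z : ℂ) := rfl

lemma polyMap_mem_R0 (K : Set ℂ) (p : Polynomial ℂ) : polyMap K p ∈ R0 K := by
  refine ⟨p, 1, fun z _ => by simp, fun z => by simp [polyMap_apply]⟩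

lemma polyMap_mem_RK (K : Set ℂ) (p : Polynomial ℂ) : polyMap K p ∈ RK K :=
  subset_closure (polyMap_mem_R0 K p)

lemma zpowMap_mem_R0 (K : Set ℂ) (n : ℕ) : zpowMap K n ∈ R0 K :=
  ⟨Polynomial.X ^ n, 1, fun z _ => by simp, fun z => by simp [zpowMap]⟩

lemma zpowMap_mem_RK (K : Set ℂ) (n : ℕ) : zpowMap K n ∈ RK K :=
  subset_closure (zpowMap_mem_R0 K n)

lemma zpowMap_zero (K : Set ℂ) : zpowMap K 0 = 1 := by
  ext z; simp [zpowMap]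

lemma zpowMap_succ (K : Set ℂ) (n : ℕ) :
    zpowMap K (n + 1) = zpowMap K 1 * zpowMap K n := by
  ext z; simp [zpowMap, pow_succ]; ring

lemma one_mem_RK (K : Set ℂ) : (1 : C(K, ℂ)) ∈ RK K := by
  rw [← zpowMap_zero]; exact zpowMap_mem_RK K 0

lemma zero_mem_RK (K : Set ℂ) : (0 : C(K, ℂ)) ∈ RK K :=
  subset_closure ⟨0, 1, fun z _ => by simp, fun z => by simp⟩

lemma polyMap_add (K : Set ℂ) (p q : Polynomial ℂ) :
    polyMap K (p + q) = polyMap K p + polyMap K q := by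
  ext z; simp [polyMap_apply]

lemma polyMap_monomial (K : Set ℂ) (n : ℕ) (a : ℂ) :
    polyMap K (Polynomial.monomial n a) = a • zpowMap K n := by
  ext z; simp [polyMap_apply, zpowMap, Polynomial.eval_monomial]

/-- The key abstract lemma: if there are functions in `R₀(K)` of the form `z^m · G`
with `G(0) = -1`, tending to `0` uniformly, then `R(K)` has no nondegenerate bounded
point derivation of order `m` at `0`. -/
lemma noNBPD_of_seq (K : Set ℂ) (h0 : (0 : ℂ) ∈ K) (m : ℕ) (hm : 1 ≤ m)
    (F : ℕ → C(K, ℂ)) (hF0 : ∀ N, F N ∈ R0 K)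
    (hFsplit : ∀ N, ∃ G ∈ R0 K, F N = zpowMap K m * G ∧ G ⟨0, h0⟩ = -1)
    (hFlim : Filter.Tendsto F Filter.atTop (nhds 0)) :
    ¬ HasNBPD K 0 m := by
  rintro ⟨d, ⟨hd0, hadd, hsmul, hleib⟩, hcont, f₀, hf₀RK, hf₀⟩
  have hd0' : ∀ f ∈ RK K, d 0 f = f ⟨0, h0⟩ := fun f hf => hd0 f hf h0
  set c : ℂ := d 1 (zpowMap K 1) with hc
  -- value of d 0 on powers
  have hz0val : ∀ n, 1 ≤ n → d 0 (zpowMap K n) = 0 := by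
    intro n hn
    rw [hd0' _ (zpowMap_mem_RK K n)]
    simp [zpowMap, zero_pow (by omega : n ≠ 0)]
  have hone : d 1 (1 : C(K, ℂ)) = 0 := by
    have h := hleib 1 le_rfl hm 1 (one_mem_RK K) 1 (one_mem_RK K)
    rw [mul_one] at h
    have h0v : d 0 (1 : C(K, ℂ)) = 1 := by
      rw [hd0' _ (one_mem_RK K)]; simp
    simp [Finset.sum_range_succ, h0v] at h
    exact h
  -- d j (z^n) = 0 for j < n
  have hL : ∀ n, ∀ j ≤ m, j < n → d j (zpowMap K n) = 0 := by
    intro n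
    induction n with
    | zero => intro j _ hj; omega
    | succ n ih =>
      intro j hjm hjn
      rcases Nat.eq_zero_or_pos j with hj0 | hj1
      · subst hj0; exact hz0val (n + 1) (by omega)
      have h := hleib j hj1 hjm (zpowMap K 1) (zpowMap_mem_RK K 1)
        (zpowMap K n) (zpowMap_mem_RK K n)
      rw [← zpowMap_succ] at h
      rw [h]
      apply Finset.sum_eq_zero
      intro i hi
      rcases Nat.eq_zero_or_pos i with hi0 | hi1
      · subst hi0; rw [hz0val 1 le_rfl]; ring
      · have : d (j - i) (zpowMap K n) = 0 := by
          apply ih (j - i) (by omega) (by omega)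
        rw [this]; ring
  -- d n (z^n) = c ^ n
  have hM : ∀ n ≤ m, d n (zpowMap K n) = c ^ n := by
    intro n
    induction n with
    | zero =>
      intro _
      rw [zpowMap_zero, hd0' _ (one_mem_RK K)]; simp
    | succ n ih =>
      intro hnm
      have h := hleib (n + 1) (by omega) hnm (zpowMap K 1) (zpowMap_mem_RK K 1)
        (zpowMap K n) (zpowMap_mem_RK K n)
      rw [← zpowMap_succ] at h
      rw [h]
      rw [Finset.sum_eq_single 1]
      · simp only [Nat.add_sub_cancel]
        rw [ih (by omega), ← hc, pow_succ]
        ring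
      · intro i hi hi1
        rcases Nat.eq_zero_or_pos i with hi0 | hipos
        · subst hi0; rw [hz0val 1 le_rfl]; ring
        · have hi2 : 2 ≤ i := by omega
          have hile : i ≤ n + 1 := by
            simpa using Finset.mem_range_succ_iff.mp hi
          have : d (n + 1 - i) (zpowMap K n) = 0 :=
            hL n (n + 1 - i) (by omega) (by omega)
          rw [this]; ring
      · intro h1; exfalso; apply h1; exact Finset.mem_range.mpr (by omega)
  -- d 1 on polynomials
  have hpoly1 : ∀ p : Polynomial ℂ, d 1 (polyMap K p) = c * (Polynomial.derivative p).eval 0 := by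
    intro p
    induction p using Polynomial.induction_on' with
    | add p q hp hq =>
      rw [polyMap_add, hadd 1 hm _ (polyMap_mem_RK K p) _ (polyMap_mem_RK K q), hp, hq]
      simp; ring
    | monomial n a =>
      rw [polyMap_monomial, hsmul 1 hm a _ (zpowMap_mem_RK K n)]
      match n with
      | 0 => rw [zpowMap_zero, hone]; simp
      | 1 => rw [← hc]; simp [Polynomial.derivative_monomial]; ring
      | (k + 2) =>
        rw [hL (k + 2) 1 hm (by omega)]
        simp [Polynomial.derivative_monomial, zero_pow]
  -- c ≠ 0
  have hcne : c ≠ 0 := by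
    intro hc0
    -- d 1 vanishes on R0
    have hR0 : ∀ f ∈ R0 K, d 1 f = 0 := by
      rintro f ⟨p, q, hq, hf⟩
      have hfq : f * polyMap K q = polyMap K p := by
        ext z
        simp only [ContinuousMap.mul_apply, polyMap_apply, hf z]
        exact div_mul_cancel₀ _ (hq z z.2)
      have h := hleib 1 le_rfl hm f (subset_closure ⟨p, q, hq, hf⟩)
        (polyMap K q) (polyMap_mem_RK K q)
      rw [hfq, Finset.sum_range_succ, Finset.sum_range_one] at h
      simp only [Nat.sub_self, Nat.sub_zero] at h
      rw [hpoly1 p, hpoly1 q, hc0, zero_mul, zero_mul, mul_zero, zero_add,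
        hd0' _ (polyMap_mem_RK K q)] at h
      have hq0 : (polyMap K q) ⟨0, h0⟩ ≠ 0 := by
        simpa [polyMap_apply] using hq 0 h0
      rcases mul_eq_zero.mp h.symm with h' | h'
      · exact h'
      · exact absurd h' hq0
    -- by continuity d 1 vanishes on RK, contradiction
    have hcont1 : Continuous fun f : RK K => d 1 f.1 := hcont 1 hm
    have hclosed : IsClosed {f : RK K | d 1 f.1 = 0} :=
      isClosed_eq hcont1 continuous_const
    have hsub : (Subtype.val ⁻¹' R0 K : Set (RK K)) ⊆ {f : RK K | d 1 f.1 = 0} :=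
      fun f hf => hR0 f.1 hf
    have hx : (⟨f₀, hf₀RK⟩ : RK K) ∈ closure (Subtype.val ⁻¹' R0 K : Set (RK K)) := by
      rw [closure_subtype]
      have himg : Subtype.val '' (Subtype.val ⁻¹' R0 K : Set (RK K)) = R0 K := by
        rw [Subtype.image_preimage_coe]
        exact Set.inter_eq_right.mpr (fun f hf => subset_closure hf)
      rw [himg]
      exact hf₀RK
    have : d 1 f₀ = 0 := (hclosed.closure_subset_iff.mpr hsub) hx
    exact hf₀ this
  -- compute d m (F N) = -c^m
  have hdm : ∀ N, d m (F N) = -c ^ m := by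
    intro N
    obtain ⟨G, hG0, hFeq, hGval⟩ := hFsplit N
    have hGRK : G ∈ RK K := subset_closure hG0
    have h := hleib m hm le_rfl (zpowMap K m) (zpowMap_mem_RK K m) G hGRK
    rw [← hFeq] at h
    rw [h, Finset.sum_eq_single m]
    · rw [hM m le_rfl, Nat.sub_self, hd0' _ hGRK, hGval]; ring
    · intro i hi him
      have : d i (zpowMap K m) = 0 :=
        hL m i (by simpa using Finset.mem_range_succ_iff.mp hi) (by
          have := Finset.mem_range_succ_iff.mp hi; omega)
      rw [this]; ring
    · intro h1; exact absurd (Finset.mem_range.mpr (by omega)) h1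
  -- continuity contradiction
  have hdm0 : d m (0 : C(K, ℂ)) = 0 := by
    have h := hadd m le_rfl 0 (zero_mem_RK K) 0 (zero_mem_RK K)
    rw [add_zero] at h
    have := left_eq_add.mp h
    exact this
  have hFRK : ∀ N, F N ∈ RK K := fun N => subset_closure (hF0 N)
  have htend : Filter.Tendsto (fun N => (⟨F N, hFRK N⟩ : RK K)) Filter.atTop
      (nhds ⟨0, zero_mem_RK K⟩) := by
    rw [tendsto_subtype_rng]
    exact hFlim
  have h1 : Filter.Tendsto (fun N => d m (F N)) Filter.atTop (nhds (d m 0)) :=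
    ((hcont m le_rfl).tendsto _).comp htend
  rw [hdm0] at h1
  have h2 : Filter.Tendsto (fun _ : ℕ => -c ^ m) Filter.atTop (nhds (-c ^ m)) :=
    tendsto_const_nhds
  have : -c ^ m = (0 : ℂ) := by
    apply tendsto_nhds_unique _ h1
    simpa only [hdm] using h2
  exact hcne (pow_eq_zero_iff (by omega : m ≠ 0) |>.mp (by linear_combination -this))

end Aux

set_option maxHeartbeats 1000000 in
/-- Lemma 4.5: for each `m ≥ 1` there is a road runner satisfying the Browder condition
of order `m−1` at the origin such that `R(K)` has no nondegenerate bounded point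
derivation of order `m` at the origin. -/
theorem road_runner (m : ℕ) (hm : 1 ≤ m) :
    ∃ a r : ℕ → ℝ,
      (∀ n, 0 < a n) ∧ (∀ n, 0 < r n) ∧ StrictAnti a ∧
      Filter.Tendsto a Filter.atTop (nhds 0) ∧
      (∀ n, closedBall ((a n : ℂ)) (r n) ⊆ ball (0 : ℂ) 1) ∧
      (Pairwise fun i j =>
        Disjoint (closedBall ((a i : ℂ)) (r i)) (closedBall ((a j : ℂ)) (r j))) ∧
      ∀ K : Set ℂ, K = closedBall (0 : ℂ) 1 \ ⋃ n, ball ((a n : ℂ)) (r n) →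
        (0 : ℂ) ∈ K ∧
        browderSum (fun n => ((a n : ℂ))) r 0 (m - 1) < ⊤ ∧
        ¬ HasNBPD K 0 m := by
  set a : ℕ → ℝ := fun n => (1/2 : ℝ) ^ (n + 1) with ha_def
  set r : ℕ → ℝ := fun n => (n + 1 : ℝ) * a n ^ (m + 1) / 16 with hr_def
  have ha_pos : ∀ n, 0 < a n := fun n => pow_pos (by norm_num) _
  have ha_le_half : ∀ n, a n ≤ 1 / 2 := by
    intro n
    have := pow_le_pow_of_le_one (by norm_num : (0:ℝ) ≤ 1/2) (by norm_num)
      (by omega : 1 ≤ n + 1)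
    simpa [ha_def] using this
  have ha_le_one : ∀ n, a n ≤ 1 := fun n => (ha_le_half n).trans (by norm_num)
  have hr_pos : ∀ n, 0 < r n := by
    intro n
    have : (0:ℝ) < (n + 1 : ℝ) := by positivity
    exact div_pos (mul_pos this (pow_pos (ha_pos n) _)) (by norm_num)
  have hna : ∀ n : ℕ, ((n : ℝ) + 1) * a n ≤ 1 := by
    intro n
    have h2 : ((n:ℝ) + 1) ≤ 2 ^ (n + 1) := by
      exact_mod_cast (Nat.lt_two_pow_self (n := n + 1)).le
    have ha_eq : a n = 1 / 2 ^ (n + 1) := by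
      simp [ha_def, div_pow]
    rw [ha_eq, mul_one_div, div_le_one (by positivity)]
    exact h2
  have hr_le : ∀ n, r n ≤ a n / 16 := by
    intro n
    have hp : a n ^ (m + 1) ≤ a n ^ 2 :=
      pow_le_pow_of_le_one (ha_pos n).le (ha_le_one n) (by omega)
    have h1 : r n ≤ ((n : ℝ) + 1) * a n ^ 2 / 16 := by
      apply div_le_div_of_nonneg_right ?_ (by norm_num)
      exact mul_le_mul_of_nonneg_left hp (by positivity)
    refine h1.trans ?_
    apply div_le_div_of_nonneg_right ?_ (by norm_num)
    calc ((n : ℝ) + 1) * a n ^ 2 = (((n : ℝ) + 1) * a n) * a n := by ring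
      _ ≤ 1 * a n := mul_le_mul_of_nonneg_right (hna n) (ha_pos n).le
      _ = a n := one_mul _
  have hr_lt_a : ∀ n, r n < a n := fun n =>
    (hr_le n).trans_lt (by linarith [ha_pos n])
  have ha_anti : StrictAnti a := by
    intro i j hij
    exact pow_lt_pow_right_of_lt_one₀ (by norm_num) (by norm_num) (by omega)
  have ha_tend : Filter.Tendsto a Filter.atTop (nhds 0) := by
    have h := tendsto_pow_atTop_nhds_zero_of_lt_one
      (by norm_num : (0:ℝ) ≤ 1/2) (by norm_num : (1/2:ℝ) < 1)
    exact h.comp (tendsto_add_atTop_nat 1)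
  have hdist : ∀ i j : ℕ, dist ((a i : ℂ)) ((a j : ℂ)) = |a i - a j| := by
    intro i j
    rw [Complex.dist_eq, ← Complex.ofReal_sub, Complex.norm_real, Real.norm_eq_abs]
  have hdist0 : ∀ n, dist (0 : ℂ) ((a n : ℂ)) = a n := by
    intro n
    rw [dist_comm, Complex.dist_eq, sub_zero, Complex.norm_real, Real.norm_eq_abs, abs_of_pos (ha_pos n)]
  refine ⟨a, r, ha_pos, hr_pos, ha_anti, ha_tend, ?_, ?_, ?_⟩
  · -- closed balls inside unit ball
    intro n
    apply closedBall_subset_ball'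
    rw [dist_comm, hdist0 n]
    have := hr_le n
    have := ha_le_half n
    linarith [ha_pos n]
  · -- pairwise disjoint
    have key : ∀ i j : ℕ, i < j →
        Disjoint (closedBall ((a i : ℂ)) (r i)) (closedBall ((a j : ℂ)) (r j)) := by
      intro i j hij
      apply closedBall_disjoint_closedBall
      rw [hdist i j]
      have haj : a j ≤ a (i + 1) := by
        rcases eq_or_lt_of_le (Nat.succ_le_of_lt hij) with h | h
        · rw [← h]
        · exact (ha_anti h).le
      have hai1 : a (i + 1) = a i / 2 := by
        simp only [ha_def]
        ring
      rw [abs_of_pos (by linarith [ha_anti hij, ha_pos j, ha_pos i] : (0:ℝ) < a i - a j)]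
      have h1 := hr_le i
      have h2 := hr_le j
      have h3 : a j ≤ a i / 2 := by rw [← hai1]; exact haj
      linarith [ha_pos i]
    intro i j hij
    rcases hij.lt_or_gt with h | h
    · exact key i j h
    · exact (key j i h).symm
  · -- the K part
    intro K hKeq
    have hzK1 : ∀ z ∈ K, ‖(z : ℂ)‖ ≤ 1 := by
      intro z hz
      rw [hKeq] at hz
      have := hz.1
      rwa [mem_closedBall, dist_zero_right] at this
    have hzK : ∀ z ∈ K, ∀ n, ((a n : ℝ) : ℂ) ≠ z ∧ r n ≤ dist z ((a n : ℂ)) := by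
      intro z hz n
      rw [hKeq] at hz
      have hnb : z ∉ ball ((a n : ℂ)) (r n) := fun h => hz.2 (mem_iUnion.mpr ⟨n, h⟩)
      rw [mem_ball] at hnb
      push_neg at hnb
      constructor
      · intro h
        rw [← h] at hnb
        simp at hnb
        linarith [hr_pos n]
      · exact hnb
    have h0K : (0 : ℂ) ∈ K := by
      rw [hKeq]
      constructor
      · simp
      · intro h
        rw [mem_iUnion] at h
        obtain ⟨n, hn⟩ := h
        rw [mem_ball, hdist0 n] at hn
        linarith [hr_le n, ha_pos n, hr_lt_a n]
    refine ⟨h0K, ?_, ?_⟩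
    · -- Browder sum finite
      rw [browderSum]
      rw [ENNReal.add_lt_top]
      constructor
      · have : browderTerm 0 0 1 (m - 1) = 1 := by
          rw [browderTerm]
          simp
        rw [this]; exact ENNReal.one_lt_top
      · -- the tsum
        set u : ℕ → ℝ := fun n => r n / (a n / 2) ^ m with hu_def
        have hu_pos : ∀ n, 0 < u n := fun n =>
          div_pos (hr_pos n) (pow_pos (by linarith [ha_pos n]) m)
        have hterm_le : ∀ n, browderTerm 0 ((a n : ℂ)) (r n) (m - 1)
            ≤ ENNReal.ofReal (u n) := by
          intro n
          rw [browderTerm]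
          have hmm : m - 1 + 1 = m := by omega
          rw [hmm, hdist0 n]
          have habs : |a n - r n| = a n - r n :=
            abs_of_pos (by linarith [hr_lt_a n])
          rw [habs]
          have hden : (a n / 2) ^ m ≤ (a n - r n) ^ m := by
            apply pow_le_pow_left₀ (by linarith [ha_pos n])
            linarith [hr_le n, ha_pos n]
          calc ENNReal.ofReal (r n) / ENNReal.ofReal ((a n - r n) ^ m)
              ≤ ENNReal.ofReal (r n) / ENNReal.ofReal ((a n / 2) ^ m) :=
                ENNReal.div_le_div le_rfl (ENNReal.ofReal_le_ofReal hden)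
            _ = ENNReal.ofReal (r n / (a n / 2) ^ m) :=
                (ENNReal.ofReal_div_of_pos (pow_pos (by linarith [ha_pos n]) m)).symm
        have hu_eq : ∀ n : ℕ, u n = (2 ^ m / 16) * (((n : ℝ) + 1) * a n) := by
          intro n
          have hane : a n ≠ 0 := (ha_pos n).ne'
          have hps : a n ^ (m + 1) = a n ^ m * a n := pow_succ _ _
          rw [hu_def]
          simp only
          rw [hr_def]
          simp only
          rw [div_pow, hps]
          have h2ne : (2:ℝ) ^ m ≠ 0 := by positivity
          have hamne : a n ^ m ≠ 0 := pow_ne_zero _ hane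
          field_simp
        have hsumm : Summable u := by
          have h1 : Summable (fun n : ℕ => (n : ℝ) ^ 1 * (1/2) ^ n) :=
            summable_pow_mul_geometric_of_norm_lt_one 1 (by
              rw [Real.norm_eq_abs, abs_of_pos (by norm_num : (0:ℝ) < 1/2)]; norm_num)
          have h2 : Summable (fun n : ℕ => ((n + 1 : ℕ) : ℝ) ^ 1 * (1/2) ^ (n + 1)) :=
            (summable_nat_add_iff 1).mpr h1
          have h3 : Summable (fun n : ℕ => ((n : ℝ) + 1) * (1/2 : ℝ) ^ (n + 1)) := by
            apply h2.congr
            intro n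
            push_cast
            ring
          have h4 : Summable (fun n : ℕ => ((n : ℝ) + 1) * a n) := by
            apply h3.congr
            intro n
            simp only [ha_def]
          exact (h4.mul_left _).congr (fun n => (hu_eq n).symm)
        calc ∑' n, browderTerm 0 ((a n : ℂ)) (r n) (m - 1)
            ≤ ∑' n, ENNReal.ofReal (u n) := ENNReal.tsum_le_tsum hterm_le
          _ = ENNReal.ofReal (∑' n, u n) :=
              (ENNReal.ofReal_tsum_of_nonneg (fun n => (hu_pos n).le) hsumm).symm
          _ < ⊤ := ENNReal.ofReal_lt_top
    · -- no NBPD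
      have hKcomp : IsCompact K := by
        rw [hKeq]
        exact (isCompact_closedBall _ _).diff (isOpen_iUnion fun n => isOpen_ball)
      haveI : CompactSpace K := isCompact_iff_compactSpace.mp hKcomp
      have hne : ∀ (N : ℕ) (z : K), ((z : ℂ) - (a N : ℂ)) ≠ 0 := by
        intro N z
        rw [sub_ne_zero]
        exact fun h => (hzK z z.2 N).1 h.symm
      set G : ℕ → C(K, ℂ) := fun N =>
        ⟨fun z => (a N : ℂ) / ((z : ℂ) - (a N : ℂ)),
          Continuous.div continuous_const
            (continuous_subtype_val.sub continuous_const) (hne N)⟩ with hG_def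
      set F : ℕ → C(K, ℂ) := fun N => zpowMap K m * G N with hF_def
      have haC_ne : ∀ N, ((a N : ℝ) : ℂ) ≠ 0 := fun N =>
        Complex.ofReal_ne_zero.mpr (ha_pos N).ne'
      have hqKne : ∀ N, ∀ z ∈ K, (Polynomial.X - Polynomial.C ((a N : ℝ) : ℂ)).eval z ≠ 0 := by
        intro N z hz
        simp only [Polynomial.eval_sub, Polynomial.eval_X, Polynomial.eval_C]
        rw [sub_ne_zero]
        exact fun h => (hzK z hz N).1 h.symm
      have hG0 : ∀ N, G N ∈ R0 K := by
        intro N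
        refine ⟨Polynomial.C ((a N : ℝ) : ℂ), Polynomial.X - Polynomial.C ((a N : ℝ) : ℂ),
          hqKne N, fun z => ?_⟩
        simp [hG_def]
      have hF0 : ∀ N, F N ∈ R0 K := by
        intro N
        refine ⟨Polynomial.C ((a N : ℝ) : ℂ) * Polynomial.X ^ m,
          Polynomial.X - Polynomial.C ((a N : ℝ) : ℂ), hqKne N, fun z => ?_⟩
        simp [hF_def, hG_def, zpowMap]
        rw [mul_div_assoc]
        ring
      apply noNBPD_of_seq K h0K m hm F hF0
      · intro N
        refine ⟨G N, hG0 N, rfl, ?_⟩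
        simp [hG_def]
        rw [div_neg, div_self (haC_ne N)]
      · -- uniform convergence to 0
        rw [tendsto_zero_iff_norm_tendsto_zero]
        set ε : ℕ → ℝ := fun N => 2 * a N + 2 ^ (m + 4) / (N + 1) with hε_def
        have hε_nonneg : ∀ N, 0 ≤ ε N := by
          intro N
          have : (0:ℝ) < (N:ℝ) + 1 := by positivity
          have := ha_pos N
          positivity
        have hbound : ∀ N, ‖F N‖ ≤ ε N := by
          intro N
          rw [ContinuousMap.norm_le _ (hε_nonneg N)]
          intro z
          have hz1 : ‖(z : ℂ)‖ ≤ 1 := hzK1 z z.2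
          have hzn : (0:ℝ) ≤ ‖(z : ℂ)‖ := norm_nonneg _
          set T : ℝ := ‖(z : ℂ) - (a N : ℂ)‖ with hT_def
          have hT_pos : 0 < T := norm_pos_iff.mpr (hne N z)
          have hrT : r N ≤ T := by
            have h5 := (hzK z z.2 N).2
            rw [Complex.dist_eq] at h5
            rw [hT_def]
            exact h5
          have hval : ‖(F N) z‖ = ‖(z : ℂ)‖ ^ m * (a N / T) := by
            simp only [hF_def, hG_def, ContinuousMap.mul_apply, ContinuousMap.coe_mk,
              zpowMap, norm_mul, norm_pow, norm_div]
            rw [Complex.norm_real, Real.norm_eq_abs, abs_of_pos (ha_pos N), ← hT_def]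
          rw [hval]
          have hzT : ‖(z : ℂ)‖ ≤ T + a N := by
            calc ‖(z : ℂ)‖ = ‖((z : ℂ) - (a N : ℂ)) + (a N : ℂ)‖ := by ring_nf
              _ ≤ T + ‖((a N : ℝ) : ℂ)‖ := norm_add_le _ _
              _ = T + a N := by
                  rw [Complex.norm_real, Real.norm_eq_abs, abs_of_pos (ha_pos N)]
          rcases le_or_gt (a N) T with hcase | hcase
          · -- T ≥ a N : bound by 2 a N
            have h1 : ‖(z : ℂ)‖ ^ m ≤ ‖(z : ℂ)‖ :=
              pow_le_of_le_one hzn hz1 (by omega)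
            have h2 : ‖(z : ℂ)‖ ^ m * a N ≤ (2 * a N) * T := by
              have : ‖(z : ℂ)‖ ^ m ≤ T + a N := h1.trans hzT
              nlinarith [ha_pos N, hT_pos]
            have h3 : ‖(z : ℂ)‖ ^ m * (a N / T) ≤ 2 * a N := by
              rw [mul_div_assoc'] at *
              exact (div_le_iff₀ hT_pos).mpr h2
            have h4 : (0:ℝ) < 2 ^ (m + 4) / ((N:ℝ) + 1) := by positivity
            rw [hε_def]
            simp only
            push_cast
            linarith
          · -- T < a N : bound by 2^(m+4)/(N+1)
            have h1 : ‖(z : ℂ)‖ ^ m ≤ (2 * a N) ^ m :=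
              pow_le_pow_left₀ hzn (by linarith) m
            have h2 : a N / T ≤ a N / r N :=
              div_le_div_of_nonneg_left (ha_pos N).le (hr_pos N) hrT
            have h3 : ‖(z : ℂ)‖ ^ m * (a N / T) ≤ (2 * a N) ^ m * (a N / r N) := by
              apply mul_le_mul h1 h2 (by positivity) (by positivity)
            have h4 : (2 * a N) ^ m * (a N / r N) = 2 ^ (m + 4) / ((N:ℝ) + 1) := by
              rw [hr_def]
              simp only
              rw [mul_pow]
              have hane := (ha_pos N).ne'
              have hNne : ((N:ℝ) + 1) ≠ 0 := by positivity
              field_simp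
              ring
            rw [hε_def]
            simp only
            push_cast
            have := ha_pos N
            linarith [h3.trans_eq h4]
        apply squeeze_zero (fun N => norm_nonneg _) hbound
        rw [hε_def]
        have hlim1 : Filter.Tendsto (fun N => 2 * a N) Filter.atTop (nhds 0) := by
          have h := ha_tend.const_mul (2:ℝ)
          rw [mul_zero] at h
          exact h
        have hlim2 : Filter.Tendsto (fun N : ℕ => (2:ℝ) ^ (m + 4) / ((N:ℝ) + 1))
            Filter.atTop (nhds 0) := by
          have h := tendsto_const_div_atTop_nhds_zero_nat ((2:ℝ) ^ (m + 4))
          have h2 := h.comp (tendsto_add_atTop_nat 1)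
          apply h2.congr
          intro n
          simp only [Function.comp]
          push_cast
          ring
        simpa using hlim1.add hlim2

end
end
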